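/- arXiv:1303.3345 — 6 statements merged into one kernel-verified Lean document; each statement's English description precedes it below -/
import Mathlib

section
/- Let f satisfy the base hypotheses with f ∈ RV₀(β) for some β > 1. Let φ ∈ C¹((0,∞);(0,∞)) be increasing with lim_{x→0⁺} f(x)/φ(x) = 1 and lim_{x→0⁺} x·φ'(x)/φ(x) = β, and let γ ∈ C¹((0,∞);(0,∞)) be decreasing with lim_{t→∞} g(t)/γ(t) = 1 and lim_{t→∞} t·γ'(t)/γ(t) = -θ for some θ > 0. If lim_{t→∞} g(t)/(f∘F⁻¹)(t) = +∞, then lim_{t→∞} φ⁻¹(γ(t))/(t·γ(t)) = 0. -/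
open Filter Real Set Topology MeasureTheory

noncomputable section

/-- A function `f : (0,∞) → (0,∞)` is regularly varying at `0` with index `β` if
`f(λx)/f(x) → λ^β` as `x → 0⁺` for every `λ > 0`. -/
def RVat0 (f : ℝ → ℝ) (β : ℝ) : Prop :=
  ∀ lam : ℝ, 0 < lam →
    Tendsto (fun x => f (lam * x) / f x) (nhdsWithin 0 (Set.Ioi 0)) (nhds (lam ^ β))

/-- A function `h : (0,∞) → (0,∞)` is regularly varying at `∞` with index `α` if
`h(λt)/h(t) → λ^α` as `t → ∞` for every `λ > 0`. -/
def RVatInf (h : ℝ → ℝ) (α : ℝ) : Prop :=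
  ∀ lam : ℝ, 0 < lam →
    Tendsto (fun t => h (lam * t) / h t) atTop (nhds (lam ^ α))

/-- A continuous solution of the perturbed ODE `x'(t) = -f(x(t)) + g(t)`, `t > 0`,
with initial condition `x(0) = ξ`. -/
def IsSol (f g : ℝ → ℝ) (ξ : ℝ) (x : ℝ → ℝ) : Prop :=
  ContinuousOn x (Set.Ici 0) ∧ x 0 = ξ ∧
    ∀ t : ℝ, 0 < t → HasDerivAt x (-f (x t) + g t) t

theorem rv_low (φ φ' : ℝ → ℝ) (p : ℝ) (s : Set ℝ) (hconv : Convex ℝ s)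
    (hs : s ⊆ Set.Ioi 0)
    (hpos : ∀ y ∈ s, 0 < φ y)
    (hderiv : ∀ y ∈ s, HasDerivAt φ (φ' y) y)
    (hbd : ∀ y ∈ interior s, p ≤ y * φ' y / φ y)
    {a b : ℝ} (ha : a ∈ s) (hb : b ∈ s) (hab : a ≤ b) :
    φ a * (b / a) ^ p ≤ φ b := by
  set L : ℝ → ℝ := fun y => Real.log (φ y) - p * Real.log y with hLdef
  have hLd : ∀ y ∈ s, HasDerivAt L (φ' y / φ y - p / y) y := by
    intro y hy
    have h1 : HasDerivAt (fun z => Real.log (φ z)) ((φ y)⁻¹ * φ' y) y :=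
      (Real.hasDerivAt_log (hpos y hy).ne').comp y (hderiv y hy)
    have h2 : HasDerivAt (fun z => p * Real.log z) (p * y⁻¹) y :=
      (Real.hasDerivAt_log (ne_of_gt (hs hy))).const_mul p
    have h3 := h1.sub h2
    convert h3 using 1
    · rfl
    · rfl
    · rfl
    · ring
  have hmono : MonotoneOn L s := by
    apply monotoneOn_of_deriv_nonneg hconv
    · exact fun y hy => (hLd y hy).continuousAt.continuousWithinAt
    · exact fun y hy => (hLd y (interior_subset hy)).differentiableAt.differentiableWithinAt
    · intro y hy
      have hy' := hbd y hy
      have hy0 : 0 < y := hs (interior_subset hy)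
      have hφ0 : 0 < φ y := hpos y (interior_subset hy)
      rw [(hLd y (interior_subset hy)).deriv]
      rw [sub_nonneg, div_le_div_iff₀ hy0 hφ0, mul_comm (φ' y) y]
      exact (le_div_iff₀ hφ0).mp hy'
  have h := hmono ha hb hab
  have ha0 : 0 < a := hs ha
  have hb0 : 0 < b := hs hb
  have hba : 0 < b / a := div_pos hb0 ha0
  have hlog : Real.log (φ a) + p * Real.log (b / a) ≤ Real.log (φ b) := by
    rw [Real.log_div hb0.ne' ha0.ne']
    simp only [hLdef] at h
    linarith
  have h2 := Real.exp_le_exp.mpr hlog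
  rwa [Real.exp_add, Real.exp_log (hpos a ha), Real.exp_log (hpos b hb),
    mul_comm p (Real.log (b / a)), ← Real.rpow_def_of_pos hba] at h2

set_option maxHeartbeats 2000000 in
/-- STEP 1 of the proof of Theorem 2.5(i): under the base hypotheses, with
`f ∈ RV₀(β)` for some `β > 1`, let `φ ∈ C¹((0,∞);(0,∞))` be increasing with
`f(x)/φ(x) → 1` and `xφ'(x)/φ(x) → β` as `x → 0⁺`, and let `γ ∈ C¹((0,∞);(0,∞))`
be decreasing with `g(t)/γ(t) → 1` and `tγ'(t)/γ(t) → -θ` as `t → ∞`, for some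
`θ > 0`.  If `g(t)/(f∘F⁻¹)(t) → +∞`, then `φ⁻¹(γ(t))/(tγ(t)) → 0`. -/
theorem stmt_12
    (f g F Finv : ℝ → ℝ) (ξ : ℝ) (x : ℝ → ℝ)
    (hf_cont : Continuous f) (hf_lip : LocallyLipschitz f)
    (hf_sign : ∀ y : ℝ, y ≠ 0 → 0 < y * f y) (hf_zero : f 0 = 0)
    (hg_cont : ContinuousOn g (Set.Ici 0)) (hg_pos : ∀ t : ℝ, 0 < t → 0 < g t)
    (hF : ∀ y : ℝ, 0 < y → F y = ∫ u in y..(1:ℝ), 1 / f u)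
    (hF_top : Tendsto F (nhdsWithin 0 (Set.Ioi 0)) atTop)
    (hF_anti : StrictAntiOn F (Set.Ioi 0))
    (hFinv : ∀ t : ℝ, 0 ≤ t → 0 < Finv t ∧ F (Finv t) = t)
    (hFinv_to0 : Tendsto Finv atTop (nhds 0))
    (hξ : 0 < ξ) (hx : IsSol f g ξ x)
    (β : ℝ) (hβ : 1 < β) (hfRV : RVat0 f β)
    (φ φ' φinv : ℝ → ℝ)
    (hφ_pos : ∀ y : ℝ, 0 < y → 0 < φ y)
    (hφ_deriv : ∀ y : ℝ, 0 < y → HasDerivAt φ (φ' y) y)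
    (hφ'_cont : ContinuousOn φ' (Set.Ioi 0))
    (hφ_mono : StrictMonoOn φ (Set.Ioi 0))
    (hfφ : Tendsto (fun y => f y / φ y) (nhdsWithin 0 (Set.Ioi 0)) (nhds 1))
    (hφ'_lim : Tendsto (fun y => y * φ' y / φ y) (nhdsWithin 0 (Set.Ioi 0)) (nhds β))
    (hφinv : ∀ y : ℝ, 0 < y → 0 < φinv y ∧ φ (φinv y) = y)
    (γ γ' : ℝ → ℝ)
    (hγ_pos : ∀ t : ℝ, 0 < t → 0 < γ t)
    (hγ_deriv : ∀ t : ℝ, 0 < t → HasDerivAt γ (γ' t) t)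
    (hγ'_cont : ContinuousOn γ' (Set.Ioi 0))
    (hγ_anti : StrictAntiOn γ (Set.Ioi 0))
    (hgγ : Tendsto (fun t => g t / γ t) atTop (nhds 1))
    (θ : ℝ) (hθ : 0 < θ)
    (hγ'_lim : Tendsto (fun t => t * γ' t / γ t) atTop (nhds (-θ)))
    (hLinf : Tendsto (fun t => g t / f (Finv t)) atTop atTop) :
    Tendsto (fun t => φinv (γ t) / (t * γ t)) atTop (nhds 0) := by
  have hfpos : ∀ u : ℝ, 0 < u → 0 < f u := by
    intro u hu
    have h := hf_sign u hu.ne'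
    nlinarith
  set p : ℝ := (β + 1) / 2 with hpdef
  set q : ℝ := β + 1 with hqdef
  have hp1 : 1 < p := by rw [hpdef]; linarith
  have hpβ : p < β := by rw [hpdef]; linarith
  have hβq : β < q := by rw [hqdef]; linarith
  have hp0 : 0 < p := by linarith
  -- extract y₀ for the φ'-bounds
  obtain ⟨y₀, hy₀pos, hy₀⟩ : ∃ y₀ > 0, ∀ y ∈ Set.Ioo (0:ℝ) y₀,
      p < y * φ' y / φ y ∧ y * φ' y / φ y < q := by
    have h : {y : ℝ | y * φ' y / φ y ∈ Set.Ioo p q} ∈ 𝓝[>] (0:ℝ) :=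
      hφ'_lim (Ioo_mem_nhds hpβ hβq)
    rw [mem_nhdsGT_iff_exists_Ioo_subset] at h
    obtain ⟨u, hu, hsub⟩ := h
    exact ⟨u, hu, fun y hy => ⟨(hsub hy).1, (hsub hy).2⟩⟩
  -- extract y₁ for the f/φ bounds
  obtain ⟨y₁, hy₁pos, hy₁⟩ : ∃ y₁ > 0, ∀ y ∈ Set.Ioo (0:ℝ) y₁,
      φ y < 2 * f y ∧ f y < 2 * φ y := by
    have h : {y : ℝ | f y / φ y ∈ Set.Ioo (1/2 : ℝ) 2} ∈ 𝓝[>] (0:ℝ) :=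
      hfφ (Ioo_mem_nhds (by norm_num) (by norm_num))
    rw [mem_nhdsGT_iff_exists_Ioo_subset] at h
    obtain ⟨u, hu, hsub⟩ := h
    refine ⟨u, hu, fun y hy => ?_⟩
    have hmem := hsub hy
    have hφ0 : 0 < φ y := hφ_pos y hy.1
    have h1 : 1/2 < f y / φ y := hmem.1
    have h2 : f y / φ y < 2 := hmem.2
    rw [div_lt_iff₀ hφ0] at h2
    rw [lt_div_iff₀ hφ0] at h1
    constructor <;> nlinarith
  set Y : ℝ := min (min y₀ y₁) 1 with hYdef
  have hYpos : 0 < Y := lt_min (lt_min hy₀pos hy₁pos) one_pos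
  have hY1 : Y ≤ 1 := min_le_right _ _
  have hYy₀ : Y ≤ y₀ := le_trans (min_le_left _ _) (min_le_left _ _)
  have hYy₁ : Y ≤ y₁ := le_trans (min_le_left _ _) (min_le_right _ _)
  have hYprop : ∀ y ∈ Set.Ioo (0:ℝ) Y,
      (p < y * φ' y / φ y ∧ y * φ' y / φ y < q) ∧ φ y < 2 * f y ∧ f y < 2 * φ y := by
    intro y hy
    exact ⟨hy₀ y ⟨hy.1, lt_of_lt_of_le hy.2 hYy₀⟩, hy₁ y ⟨hy.1, lt_of_lt_of_le hy.2 hYy₁⟩⟩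
  have hIooSub : Set.Ioo (0:ℝ) Y ⊆ Set.Ioi 0 := fun y hy => hy.1
  have hIooInt : interior (Set.Ioo (0:ℝ) Y) = Set.Ioo 0 Y := isOpen_Ioo.interior_eq
  -- lower ratio bound for φ
  have hA1 : ∀ a b : ℝ, a ∈ Set.Ioo (0:ℝ) Y → b ∈ Set.Ioo (0:ℝ) Y → a ≤ b →
      φ a * (b / a) ^ p ≤ φ b := by
    intro a b ha hb hab
    exact rv_low φ φ' p (Set.Ioo 0 Y) (convex_Ioo 0 Y) hIooSub
      (fun y hy => hφ_pos y hy.1) (fun y hy => hφ_deriv y hy.1)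
      (fun y hy => by rw [hIooInt] at hy; exact le_of_lt (hYprop y hy).1.1) ha hb hab
  -- upper ratio bound for φ (via 1/φ)
  have hA2 : ∀ a b : ℝ, a ∈ Set.Ioo (0:ℝ) Y → b ∈ Set.Ioo (0:ℝ) Y → a ≤ b →
      φ b ≤ φ a * (b / a) ^ q := by
    intro a b ha hb hab
    have hinv := rv_low (fun y => (φ y)⁻¹) (fun y => -φ' y / (φ y) ^ 2) (-q)
      (Set.Ioo 0 Y) (convex_Ioo 0 Y) hIooSub
      (fun y hy => inv_pos.mpr (hφ_pos y hy.1))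
      (fun y hy => (hφ_deriv y hy.1).inv (hφ_pos y hy.1).ne')
      (fun y hy => by
        rw [hIooInt] at hy
        have hb := (hYprop y hy).1.2
        have hφ0 : 0 < φ y := hφ_pos y hy.1
        have : y * (-φ' y / φ y ^ 2) / (φ y)⁻¹ = -(y * φ' y / φ y) := by
          field_simp
        rw [this]
        linarith) ha hb hab
    have ha0 : 0 < a := ha.1
    have hb0 : 0 < b := hb.1
    have hba : 0 < b / a := div_pos hb0 ha0
    have hφa : 0 < φ a := hφ_pos a ha0
    have hφb : 0 < φ b := hφ_pos b hb0
    rw [Real.rpow_neg hba.le] at hinv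
    have hq0 : 0 < (b / a) ^ q := Real.rpow_pos_of_pos hba q
    have h2 := inv_anti₀ (show 0 < (φ a)⁻¹ * ((b / a) ^ q)⁻¹ by positivity) hinv
    rwa [inv_inv, mul_inv, inv_inv, inv_inv] at h2
  -- γ tends to 0
  have hγ0 : Tendsto γ atTop (nhds 0) := by
    have h : ∀ᶠ t in atTop, t * γ' t / γ t < -θ/2 :=
      hγ'_lim (Iio_mem_nhds (by linarith))
    rw [eventually_atTop] at h
    obtain ⟨t₀, ht₀⟩ := h
    set t₁ : ℝ := max t₀ 1 with ht₁def
    have ht₁1 : 1 ≤ t₁ := le_max_right _ _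
    have ht₁0 : 0 < t₁ := by linarith
    have hIciSub : Set.Ici t₁ ⊆ Set.Ioi (0:ℝ) := fun t ht => lt_of_lt_of_le ht₁0 ht
    have hbound : ∀ t ∈ Set.Ici t₁, (γ t₁)⁻¹ * (t / t₁) ^ (θ/2) ≤ (γ t)⁻¹ := by
      intro t ht
      exact rv_low (fun s => (γ s)⁻¹) (fun s => -γ' s / (γ s) ^ 2) (θ/2)
        (Set.Ici t₁) (convex_Ici t₁) hIciSub
        (fun s hs => inv_pos.mpr (hγ_pos s (hIciSub hs)))
        (fun s hs => (hγ_deriv s (hIciSub hs)).inv (hγ_pos s (hIciSub hs)).ne')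
        (fun s hs => by
          rw [interior_Ici] at hs
          have hs0 : 0 < s := lt_trans ht₁0 hs
          have hγs : 0 < γ s := hγ_pos s hs0
          have hlt : s * γ' s / γ s < -θ/2 := ht₀ s (le_of_lt (lt_of_le_of_lt (le_max_left _ _) hs))
          have heq : s * (-γ' s / γ s ^ 2) / (γ s)⁻¹ = -(s * γ' s / γ s) := by
            field_simp
          rw [heq]
          linarith)
        (self_mem_Ici) ht (by exact ht)
    apply squeeze_zero' (g := fun t => γ t₁ / (t / t₁) ^ (θ/2))
    · filter_upwards [eventually_gt_atTop (0:ℝ)] with t ht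
      exact (hγ_pos t ht).le
    · filter_upwards [eventually_ge_atTop t₁] with t ht
      have hγt : 0 < γ t := hγ_pos t (hIciSub ht)
      have hγt₁ : 0 < γ t₁ := hγ_pos t₁ ht₁0
      have hpow : 0 < (t / t₁) ^ (θ/2) := Real.rpow_pos_of_pos (div_pos (lt_of_lt_of_le ht₁0 ht) ht₁0) _
      have hb := hbound t ht
      have h2 := inv_anti₀ (show 0 < (γ t₁)⁻¹ * (t / t₁) ^ (θ/2) by positivity) hb
      rw [inv_inv] at h2
      calc γ t ≤ ((γ t₁)⁻¹ * (t / t₁) ^ (θ/2))⁻¹ := h2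
        _ = γ t₁ / (t / t₁) ^ (θ/2) := by
            rw [mul_inv, inv_inv, ← div_eq_mul_inv]
    · have h1 : Tendsto (fun t : ℝ => t / t₁) atTop atTop :=
        tendsto_id.atTop_div_const ht₁0
      have h2 : Tendsto (fun t : ℝ => (t / t₁) ^ (θ/2)) atTop atTop :=
        (tendsto_rpow_atTop (by linarith)).comp h1
      exact Tendsto.div_atTop tendsto_const_nhds h2
    -- lower bound for F
  have hB : ∀ z : ℝ, 0 < z → 2 * z < Y → z ≤ F z * (2 * (2:ℝ) ^ q * φ z) := by
    intro z hz0 hzY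
    have hz1 : 2 * z ≤ 1 := le_of_lt (lt_of_lt_of_le hzY hY1)
    have hφz : 0 < φ z := hφ_pos z hz0
    have hD : 0 < 2 * (2:ℝ) ^ q * φ z := by positivity
    have hcont : ContinuousOn (fun u => 1 / f u) (Set.Icc z 1) := by
      apply ContinuousOn.div continuousOn_const hf_cont.continuousOn
      intro u hu
      exact (hfpos u (lt_of_lt_of_le hz0 hu.1)).ne'
    have hint : ∀ a b : ℝ, z ≤ a → a ≤ b → b ≤ 1 →
        IntervalIntegrable (fun u => 1 / f u) volume a b := by
      intro a b hza hab hb1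
      apply (hcont.mono ?_).intervalIntegrable
      rw [Set.uIcc_of_le hab]
      exact Set.Icc_subset_Icc hza hb1
    have hi1 : IntervalIntegrable (fun u => 1 / f u) volume z (2*z) :=
      hint z (2*z) le_rfl (by linarith) hz1
    have hi2 : IntervalIntegrable (fun u => 1 / f u) volume (2*z) 1 :=
      hint (2*z) 1 (by linarith) hz1 le_rfl
    have hsplit : (∫ u in z..(2*z), 1 / f u) + (∫ u in (2*z)..(1:ℝ), 1 / f u)
        = ∫ u in z..(1:ℝ), 1 / f u :=
      intervalIntegral.integral_add_adjacent_intervals hi1 hi2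
    have hpos2 : 0 ≤ ∫ u in (2*z)..(1:ℝ), 1 / f u := by
      apply intervalIntegral.integral_nonneg hz1
      intro u hu
      have : 0 < f u := hfpos u (lt_of_lt_of_le (by linarith) hu.1)
      positivity
    have hbound : ∀ u ∈ Set.Icc z (2*z), 1 / (2 * (2:ℝ) ^ q * φ z) ≤ 1 / f u := by
      intro u hu
      have hu0 : 0 < u := lt_of_lt_of_le hz0 hu.1
      have huY : u < Y := lt_of_le_of_lt hu.2 hzY
      have hfu : 0 < f u := hfpos u hu0
      have h2φ : f u < 2 * φ u := ((hYprop u ⟨hu0, huY⟩).2).2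
      have hφmon : φ u ≤ φ (2*z) := by
        rcases eq_or_lt_of_le hu.2 with h | h
        · rw [h]
        · exact le_of_lt (hφ_mono (Set.mem_Ioi.mpr hu0) (Set.mem_Ioi.mpr (by linarith)) h)
      have hA2' : φ (2*z) ≤ φ z * ((2*z) / z) ^ q :=
        hA2 z (2*z) ⟨hz0, by linarith⟩ ⟨by linarith, hzY⟩ (by linarith)
      have h2z : (2*z) / z = 2 := by field_simp
      rw [h2z] at hA2'
      have hfle : f u ≤ 2 * (2:ℝ) ^ q * φ z := by nlinarith
      exact one_div_le_one_div_of_le hfu hfle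
    have hlow : z * (1 / (2 * (2:ℝ) ^ q * φ z)) ≤ ∫ u in z..(2*z), 1 / f u := by
      have hc := intervalIntegral.integral_mono_on (by linarith : z ≤ 2*z)
        (intervalIntegrable_const) hi1 hbound
      rw [intervalIntegral.integral_const, smul_eq_mul] at hc
      calc z * (1 / (2 * (2:ℝ) ^ q * φ z)) = (2*z - z) * (1 / (2 * (2:ℝ) ^ q * φ z)) := by ring
        _ ≤ _ := hc
    have hFz : z * (1 / (2 * (2:ℝ) ^ q * φ z)) ≤ F z := by
      rw [hF z hz0, ← hsplit]
      linarith
    calc z = (z * (1 / (2 * (2:ℝ) ^ q * φ z))) * (2 * (2:ℝ) ^ q * φ z) := by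
          field_simp
      _ ≤ F z * (2 * (2:ℝ) ^ q * φ z) := mul_le_mul_of_nonneg_right hFz hD.le
  -- M tends to infinity
  set M : ℝ → ℝ := fun t => γ t / φ (Finv t) with hMdef
  have hgev : ∀ᶠ t in atTop, g t < 2 * γ t := by
    have h : ∀ᶠ t in atTop, g t / γ t < 2 := hgγ (Iio_mem_nhds (by norm_num))
    filter_upwards [h, eventually_gt_atTop (0:ℝ)] with t h1 h2
    have := hγ_pos t h2
    rw [div_lt_iff₀ this] at h1
    linarith
  have hFinvY : ∀ᶠ t in atTop, Finv t < Y/2 := by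
    have : Set.Iio (Y/2) ∈ 𝓝 (0:ℝ) := Iio_mem_nhds (by linarith)
    exact hFinv_to0 this
  have hMtop : Tendsto M atTop atTop := by
    have hhalf : Tendsto (fun t => (1/4 : ℝ) * (g t / f (Finv t))) atTop atTop :=
      hLinf.const_mul_atTop (by norm_num)
    apply tendsto_atTop_mono' atTop ?_ hhalf
    · filter_upwards [hgev, hFinvY, eventually_ge_atTop (1:ℝ)] with t h1 h2 ht1
      have ht0 : (0:ℝ) < t := by linarith
      have hx0 : 0 < Finv t := (hFinv t ht0.le).1
      have hfx : 0 < f (Finv t) := hfpos _ hx0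
      have hφx : 0 < φ (Finv t) := hφ_pos _ hx0
      have hγt : 0 < γ t := hγ_pos t ht0
      have hgt : 0 < g t := hg_pos t ht0
      have hφ2f : φ (Finv t) < 2 * f (Finv t) :=
        ((hYprop (Finv t) ⟨hx0, by linarith⟩).2).1
      show (1/4) * (g t / f (Finv t)) ≤ γ t / φ (Finv t)
      rw [show (1/4 : ℝ) * (g t / f (Finv t)) = g t / (4 * f (Finv t)) by ring,
        div_le_div_iff₀ (by positivity) hφx]
      nlinarith [mul_lt_mul_of_pos_left hφ2f hγt, mul_lt_mul_of_pos_right h1 hφx]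
  -- main eventual bound
  have hγφY : ∀ᶠ t in atTop, γ t < φ (Y/2) :=
    hγ0 (Iio_mem_nhds (hφ_pos (Y/2) (by linarith)))
  have key : ∀ᶠ t in atTop,
      φinv (γ t) / (t * γ t) ≤ (2 * (2:ℝ) ^ q) * (M t) ^ (1/p - 1) := by
    filter_upwards [hFinvY, hγφY, hMtop.eventually_ge_atTop 1, eventually_ge_atTop (1:ℝ)]
      with t hxY hγY hM1 ht1
    have ht0 : (0:ℝ) < t := by linarith
    set z : ℝ := Finv t with hzdef
    have hz0 : 0 < z := (hFinv t ht0.le).1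
    have hFz : F z = t := (hFinv t ht0.le).2
    have hγt : 0 < γ t := hγ_pos t ht0
    obtain ⟨ha0, haφ⟩ := hφinv (γ t) hγt
    set a : ℝ := φinv (γ t) with hadef
    have hφz : 0 < φ z := hφ_pos z hz0
    have hMpos : 0 < M t := lt_of_lt_of_le one_pos hM1
    have hγeq : γ t = M t * φ z := by
      rw [hMdef]
      field_simp
      exact (div_self hφz.ne').symm
    have haY : a < Y/2 := by
      by_contra hcon
      push_neg at hcon
      have : φ (Y/2) ≤ φ a := by
        rcases eq_or_lt_of_le hcon with h | h
        · rw [h]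
        · exact le_of_lt (hφ_mono (Set.mem_Ioi.mpr (by linarith)) (Set.mem_Ioi.mpr ha0) h)
      rw [haφ] at this
      linarith
    have hza : z ≤ a := by
      by_contra hcon
      push_neg at hcon
      have h := hφ_mono (Set.mem_Ioi.mpr ha0) (Set.mem_Ioi.mpr hz0) hcon
      rw [haφ] at h
      nlinarith
    have hzmem : z ∈ Set.Ioo (0:ℝ) Y := ⟨hz0, by linarith⟩
    have hamem : a ∈ Set.Ioo (0:ℝ) Y := ⟨ha0, by linarith⟩
    -- ratio bound: a ≤ z * M^(1/p)
    have h1 : (a / z) ^ p ≤ M t := by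
      have h := hA1 z a hzmem hamem hza
      rw [haφ, hγeq] at h
      nlinarith [Real.rpow_pos_of_pos (div_pos ha0 hz0) p]
    have h2 : a ≤ z * (M t) ^ (1/p) := by
      have h3 := Real.rpow_le_rpow (by positivity) h1 (by positivity : (0:ℝ) ≤ 1/p)
      have hexp2 : ((a / z) ^ p) ^ (1/p : ℝ) = a / z := by
        rw [← Real.rpow_mul (by positivity : (0:ℝ) ≤ a / z), mul_one_div, div_self hp0.ne',
          Real.rpow_one]
      rw [hexp2] at h3
      rw [mul_comm]
      exact (div_le_iff₀ hz0).mp h3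
    -- F bound: z ≤ t * (2*2^q*φ z)
    have h4 : z ≤ t * (2 * (2:ℝ) ^ q * φ z) := by
      have := hB z hz0 (by linarith)
      rwa [hFz] at this
    have hpow : (0:ℝ) ≤ (M t) ^ (1/p) := (Real.rpow_pos_of_pos hMpos _).le
    rw [div_le_iff₀ (by positivity : 0 < t * γ t)]
    calc a ≤ z * (M t) ^ (1/p) := h2
      _ ≤ (t * (2 * (2:ℝ) ^ q * φ z)) * (M t) ^ (1/p) :=
          mul_le_mul_of_nonneg_right h4 hpow
      _ = 2 * (2:ℝ) ^ q * (M t) ^ (1/p - 1) * (t * γ t) := by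
          rw [hγeq, Real.rpow_sub hMpos, Real.rpow_one]
          field_simp
  have hRHS : Tendsto (fun t => (2 * (2:ℝ) ^ q) * (M t) ^ (1/p - 1)) atTop (nhds 0) := by
    have hexp : (0:ℝ) < 1 - 1/p := by
      have : 1/p < 1 := by
        rw [div_lt_one hp0]
        exact hp1
      linarith
    have h := (tendsto_rpow_neg_atTop hexp).comp hMtop
    have h2 : Tendsto (fun t => (M t) ^ (1/p - 1)) atTop (nhds 0) := by
      have heq : ∀ t, (M t) ^ (-(1 - 1/p)) = (M t) ^ (1/p - 1) := by
        intro t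
        norm_num
      simpa [Function.comp_def, heq] using h
    have h3 := h2.const_mul (2 * (2:ℝ) ^ q)
    simpa using h3
  apply squeeze_zero' ?_ key hRHS
  filter_upwards [eventually_gt_atTop (0:ℝ)] with t ht
  have hγt : 0 < γ t := hγ_pos t ht
  have := (hφinv (γ t) hγt).1
  positivity
end
end

section
/- Let f : ℝ → ℝ be continuous with x·f(x) > 0 for x ≠ 0 and f(0) = 0, let F(x) = ∫_x^1 du/f(u) for x > 0 satisfy F(x) → +∞ as x → 0⁺, and let F⁻¹ be the inverse of F (so F⁻¹(0) = 1 and F⁻¹(t) → 0 as t → ∞). Then for every T > 0, ∫_0^T f(F⁻¹(s)) ds = 1 - F⁻¹(T); consequently f∘F⁻¹ is integrable on (0,∞) with ∫_0^∞ f(F⁻¹(s)) ds = 1. -/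
open Filter Real Set Topology MeasureTheory

noncomputable section

/-- Computation from the proof of Theorem 2.2: if `f` is continuous with
`x f(x) > 0` for `x ≠ 0` and `f(0) = 0`, `F(x) = ∫_x^1 du/f(u)` tends to `+∞` as
`x → 0⁺`, and `F⁻¹` is the inverse of `F` (so `F⁻¹(0) = 1` and `F⁻¹(t) → 0`), then
`∫_0^T f(F⁻¹(s)) ds = 1 - F⁻¹(T)` for every `T > 0`; consequently `f∘F⁻¹` is
integrable on `(0,∞)` with total integral `1`. -/
theorem stmt_13 (f F Finv : ℝ → ℝ)
    (hf_cont : Continuous f)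
    (hf_sign : ∀ y : ℝ, y ≠ 0 → 0 < y * f y) (hf_zero : f 0 = 0)
    (hF : ∀ y : ℝ, 0 < y → F y = ∫ u in y..(1:ℝ), 1 / f u)
    (hF_top : Tendsto F (nhdsWithin 0 (Set.Ioi 0)) atTop)
    (hF_anti : StrictAntiOn F (Set.Ioi 0))
    (hFinv : ∀ t : ℝ, 0 ≤ t → 0 < Finv t ∧ F (Finv t) = t)
    (hFinv_zero : Finv 0 = 1)
    (hFinv_to0 : Tendsto Finv atTop (nhds 0)) :
    (∀ T : ℝ, 0 < T → ∫ s in (0:ℝ)..T, f (Finv s) = 1 - Finv T) ∧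
    IntegrableOn (fun s => f (Finv s)) (Set.Ioi 0) ∧
    ∫ s in Set.Ioi (0:ℝ), f (Finv s) = 1 := by
  -- basic positivity facts
  have hfpos : ∀ y : ℝ, 0 < y → 0 < f y := by
    intro y hy
    nlinarith [hf_sign y hy.ne']
  have hF1 : F 1 = 0 := by rw [hF 1 one_pos, intervalIntegral.integral_same]
  -- derivative of F on (0,∞)
  have hcont1f : ContinuousOn (fun u => 1 / f u) (Set.Ioi 0) := by
    intro u hu
    exact (continuousAt_const.div hf_cont.continuousAt (hfpos u hu).ne').continuousWithinAt
  have hFderiv : ∀ x : ℝ, 0 < x → HasDerivAt F (-(1 / f x)) x := by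
    intro x hx
    have hsub : Set.uIcc x 1 ⊆ Set.Ioi 0 := fun u hu => (lt_min hx one_pos).trans_le hu.1
    have hii : IntervalIntegrable (fun u => 1 / f u) volume x 1 :=
      (hcont1f.mono hsub).intervalIntegrable
    have hmeas : StronglyMeasurableAtFilter (fun u => 1 / f u) (nhds x) :=
      hcont1f.stronglyMeasurableAtFilter isOpen_Ioi x hx
    have hd := intervalIntegral.integral_hasDerivAt_left hii hmeas
      (hcont1f.continuousAt (Ioi_mem_nhds hx))
    apply hd.congr_of_eventuallyEq
    filter_upwards [Ioi_mem_nhds hx] with y hy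
    exact hF y hy
  have hFinvF : ∀ x : ℝ, 0 < x → x ≤ 1 → Finv (F x) = x := by
    intro x hx hx1
    have hFx : 0 ≤ F x := by
      rcases eq_or_lt_of_le hx1 with h | h
      · rw [h, hF1]
      · rw [← hF1]; exact (hF_anti (Set.mem_Ioi.2 hx) (Set.mem_Ioi.2 one_pos) h).le
    obtain ⟨h1, h2⟩ := hFinv (F x) hFx
    exact hF_anti.injOn (Set.mem_Ioi.2 h1) (Set.mem_Ioi.2 hx) h2
  have hFinv_mem : ∀ t : ℝ, 0 ≤ t → Finv t ∈ Set.Ioc 0 1 := by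
    intro t ht
    obtain ⟨h1, h2⟩ := hFinv t ht
    refine ⟨h1, ?_⟩
    by_contra h
    push_neg at h
    have := hF_anti (Set.mem_Ioi.2 one_pos) (Set.mem_Ioi.2 h1) h
    rw [h2, hF1] at this; linarith
  have hFinv_lt : ∀ t : ℝ, 0 < t → Finv t < 1 := by
    intro t ht
    rcases eq_or_lt_of_le (hFinv_mem t ht.le).2 with h | h
    · exfalso; have h2 := (hFinv t ht.le).2; rw [h, hF1] at h2; linarith
    · exact h
  have hFinv_anti : ∀ s t : ℝ, 0 ≤ s → s < t → Finv t < Finv s := by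
    intro s t hs hst
    by_contra h
    push_neg at h
    rcases eq_or_lt_of_le h with h | h
    · have : F (Finv s) = F (Finv t) := by rw [h]
      rw [(hFinv s hs).2, (hFinv t (hs.trans hst.le)).2] at this; linarith
    · have h2 := hF_anti (Set.mem_Ioi.2 (hFinv s hs).1)
        (Set.mem_Ioi.2 (hFinv t (hs.trans hst.le)).1) h
      rw [(hFinv s hs).2, (hFinv t (hs.trans hst.le)).2] at h2; linarith
  -- continuity of Finv on (0,∞)
  have hFinv_contAt : ∀ a : ℝ, 0 < a → ContinuousAt Finv a := by
    intro a ha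
    have hmono : StrictMonoOn (fun t => -Finv t) (Set.Ici 0) := by
      intro s hs t ht hst
      simpa using hFinv_anti s t hs hst
    have hmem : -Finv a ∈ Set.Ioo (-1 : ℝ) 0 :=
      ⟨by have := hFinv_lt a ha; linarith, by have := (hFinv a ha.le).1; linarith⟩
    have himg : (fun t => -Finv t) '' (Set.Ici 0) ∈ nhds (-Finv a) := by
      refine Filter.mem_of_superset (Ioo_mem_nhds hmem.1 hmem.2) ?_
      rintro y ⟨hy1, hy2⟩
      have hy0 : 0 < -y := by linarith
      have hy1' : -y ≤ 1 := by linarith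
      have hFy : 0 ≤ F (-y) := by
        rcases eq_or_lt_of_le hy1' with h | h
        · rw [h, hF1]
        · rw [← hF1]; exact (hF_anti (Set.mem_Ioi.2 hy0) (Set.mem_Ioi.2 one_pos) h).le
      refine ⟨F (-y), hFy, ?_⟩
      show -Finv (F (-y)) = y
      rw [hFinvF (-y) hy0 hy1']; ring
    have hc : ContinuousAt (fun t => -Finv t) a :=
      hmono.continuousAt_of_image_mem_nhds
        (Filter.mem_of_superset (Ioi_mem_nhds ha) Set.Ioi_subset_Ici_self) himg
    simpa only [Pi.neg_def, neg_neg] using hc.neg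
  have hg_contAt : ∀ s : ℝ, 0 < s → ContinuousAt (fun s => f (Finv s)) s :=
    fun s hs => hf_cont.continuousAt.comp (hFinv_contAt s hs)
  -- bound for the integrand
  obtain ⟨M, hM⟩ := (isCompact_Icc (a := (0:ℝ)) (b := 1)).exists_bound_of_continuousOn
    hf_cont.continuousOn
  have hg_int : ∀ T : ℝ, IntegrableOn (fun s => f (Finv s)) (Set.Ioc 0 T) := by
    intro T
    have hmeas : AEStronglyMeasurable (fun s => f (Finv s))
        (volume.restrict (Set.Ioc 0 T)) := by
      refine ContinuousOn.aestronglyMeasurable (fun s hs => ?_) measurableSet_Ioc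
      exact (hg_contAt s hs.1).continuousWithinAt
    refine Integrable.mono' (g := fun _ => M)
      ((integrableOn_const_iff).mpr (Or.inr measure_Ioc_lt_top)) hmeas ?_
    refine (ae_restrict_iff' measurableSet_Ioc).2 (Filter.Eventually.of_forall ?_)
    intro s hs
    exact hM (Finv s) ⟨(hFinv s hs.1.le).1.le, (hFinv_mem s hs.1.le).2⟩
  have hgIcc : ∀ T : ℝ, IntegrableOn (fun s => f (Finv s)) (Set.Icc 0 T) := by
    intro T
    exact (hg_int T).congr_set_ae Ioc_ae_eq_Icc.symm
  -- the main computation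
  have key : ∀ T : ℝ, 0 < T → ∫ s in (0:ℝ)..T, f (Finv s) = 1 - Finv T := by
    intro T hT
    set b := Finv T with hb
    have hb0 : 0 < b := (hFinv T hT.le).1
    have hb1 : b < 1 := hFinv_lt T hT
    have hFb : F b = T := (hFinv T hT.le).2
    have huIcc : Set.uIcc b 1 = Set.Icc b 1 := uIcc_of_le hb1.le
    have hsub : Set.Icc b 1 ⊆ Set.Ioi 0 := fun x hx => hb0.trans_le hx.1
    have hmin : min b 1 = b := min_eq_left hb1.le
    have hmax : max b 1 = 1 := max_eq_right hb1.le
    have hFcont : ContinuousOn F (Set.uIcc b 1) := by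
      rw [huIcc]
      exact fun x hx => ((hFderiv x (hsub hx)).continuousAt).continuousWithinAt
    have hderiv : ∀ x ∈ Set.Ioo (min b 1) (max b 1),
        HasDerivWithinAt F (-(1 / f x)) (Set.Ioi x) x := by
      rw [hmin, hmax]
      exact fun x hx => (hFderiv x (hb0.trans hx.1)).hasDerivWithinAt
    have himg_sub : F '' Set.Ioo (min b 1) (max b 1) ⊆ Set.Ioo 0 T := by
      rw [hmin, hmax]
      rintro _ ⟨x, hx, rfl⟩
      constructor
      · rw [← hF1]
        exact hF_anti (Set.mem_Ioi.2 (hb0.trans hx.1)) (Set.mem_Ioi.2 one_pos) hx.2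
      · rw [← hFb]
        exact hF_anti (Set.mem_Ioi.2 hb0) (Set.mem_Ioi.2 (hb0.trans hx.1)) hx.1
    have hg_cont : ContinuousOn (fun s => f (Finv s))
        (F '' Set.Ioo (min b 1) (max b 1)) :=
      fun s hs => (hg_contAt s (himg_sub hs).1).continuousWithinAt
    have himg2 : F '' Set.uIcc b 1 ⊆ Set.Icc 0 T := by
      rw [huIcc]
      rintro _ ⟨x, hx, rfl⟩
      constructor
      · rw [← hF1]
        rcases eq_or_lt_of_le hx.2 with h | h
        · rw [h]
        · exact (hF_anti (Set.mem_Ioi.2 (hsub hx)) (Set.mem_Ioi.2 one_pos) h).le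
      · rw [← hFb]
        rcases eq_or_lt_of_le hx.1 with h | h
        · rw [← h]
        · exact (hF_anti (Set.mem_Ioi.2 hb0) (Set.mem_Ioi.2 (hsub hx)) h).le
    have hg1 : IntegrableOn (fun s => f (Finv s)) (F '' Set.uIcc b 1) :=
      (hgIcc T).mono_set himg2
    have heq : Set.EqOn (fun x => (-(1 / f x)) • ((fun s => f (Finv s)) ∘ F) x)
        (fun _ => (-1 : ℝ)) (Set.uIcc b 1) := by
      rw [huIcc]
      intro x hx
      have hx0 : 0 < x := hsub hx
      have hfx : f x ≠ 0 := (hfpos x hx0).ne'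
      have hFinvFx : Finv (F x) = x := hFinvF x hx0 hx.2
      simp only [Function.comp, smul_eq_mul, hFinvFx]
      field_simp
    have hg2 : IntegrableOn (fun x => (-(1 / f x)) • ((fun s => f (Finv s)) ∘ F) x)
        (Set.uIcc b 1) := by
      have hfin : volume (Set.uIcc b 1) < ⊤ := by
        rw [huIcc]; exact measure_Icc_lt_top
      exact ((integrableOn_const_iff).mpr (Or.inr hfin)).congr_fun heq.symm measurableSet_uIcc
    have hsubst := intervalIntegral.integral_comp_smul_deriv''' (f := F)
      (f' := fun x => -(1 / f x)) (g := fun s => f (Finv s)) (a := b) (b := 1)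
      hFcont hderiv hg_cont hg1 hg2
    rw [hFb, hF1] at hsubst
    have hL : (∫ x in b..(1:ℝ), (-(1 / f x)) • ((fun s => f (Finv s)) ∘ F) x)
        = -(1 - b) := by
      rw [intervalIntegral.integral_congr heq]
      simp
    rw [hL, intervalIntegral.integral_symm] at hsubst
    linarith [hsubst]
  have hint : IntegrableOn (fun s => f (Finv s)) (Set.Ioi 0) := by
    refine MeasureTheory.integrableOn_Ioi_of_intervalIntegral_norm_bounded
      (l := atTop) (b := id) 1 0 hg_int tendsto_id ?_
    filter_upwards [eventually_gt_atTop (0 : ℝ)] with T hT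
    have hnorm : Set.EqOn (fun x => ‖f (Finv x)‖) (fun x => f (Finv x))
        (Set.uIcc 0 T) := by
      rw [uIcc_of_le hT.le]
      intro x hx
      have : 0 < f (Finv x) := hfpos _ (hFinv x hx.1).1
      simp [Real.norm_eq_abs, abs_of_pos this]
    calc (∫ x in (0:ℝ)..(id T), ‖f (Finv x)‖)
        = ∫ x in (0:ℝ)..T, f (Finv x) := intervalIntegral.integral_congr hnorm
      _ = 1 - Finv T := key T hT
      _ ≤ 1 := by have := (hFinv T hT.le).1; linarith
  refine ⟨key, hint, ?_⟩
  have h1 := MeasureTheory.intervalIntegral_tendsto_integral_Ioi (b := id) (l := atTop)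
    0 hint tendsto_id
  have h2 : Tendsto (fun T : ℝ => ∫ x in (0:ℝ)..(id T), f (Finv x)) atTop (nhds 1) := by
    have h3 : Tendsto (fun T : ℝ => 1 - Finv T) atTop (nhds 1) := by
      simpa using (tendsto_const_nhds (x := (1:ℝ)) (f := atTop)).sub hFinv_to0
    refine h3.congr' ?_
    filter_upwards [eventually_gt_atTop (0 : ℝ)] with T hT
    exact (key T hT).symm
  exact tendsto_nhds_unique h1 h2
end
end

section
/- Let δ ∈ (e^{-(√2-1)}, 1), let f(x) = x/log(1/x) for x ∈ (0,δ) with f(0) = 0, and let g(t) = e^{-√2(1+t)^{1/2}+(1+t)^{1/3}}·(1+t)^{-2/3}·((5√2/6) - (1/3)(1+t)^{-1/6})/(√2 - (1+t)^{-1/6}) for t ≥ 0, which is continuous and positive. Then x(t) = exp(-√2(1+t)^{1/2}+(1+t)^{1/3}) is the unique continuous solution of x'(t) = -f(x(t)) + g(t), t > 0, x(0) = e^{-(√2-1)}; moreover, with F(x) = ∫_x^δ du/f(u), one has lim_{t→∞} (f∘F⁻¹)(t) / (e^{-√2 t^{1/2}}/(√2·t^{1/2})) = 1, lim_{t→∞}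 g(t)/(f∘F⁻¹)(t) = +∞, and nevertheless lim_{t→∞} F(x(t))/t = 1. -/
open Filter Real Set Topology MeasureTheory

noncomputable section

open scoped NNReal

lemma sqrt2_gt_one : (1:ℝ) < Real.sqrt 2 := by
  have h2 : Real.sqrt 2 ^ 2 = 2 := Real.sq_sqrt (by norm_num)
  nlinarith [Real.sqrt_nonneg 2]

lemma aux_ident (v : ℝ) (hv : 1 ≤ v) :
    -(1/(Real.sqrt 2 * v^3 - v^2)) + (1/v^4) *
      ((5 * Real.sqrt 2 / 6 - (1/3) * (1/v)) / (Real.sqrt 2 - 1/v))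
    = -(Real.sqrt 2)/2 * (1/v^3) + (1/3) * (1/v^4) := by
  have h1 : (1:ℝ) < Real.sqrt 2 := sqrt2_gt_one
  have h2 : Real.sqrt 2 ^ 2 = 2 := Real.sq_sqrt (by norm_num)
  have hv0 : 0 < v := by linarith
  have hd1 : Real.sqrt 2 * v - 1 > 0 := by nlinarith
  have hd2 : Real.sqrt 2 * v^3 - v^2 > 0 := by nlinarith [mul_pos (pow_pos hv0 2) hd1]
  have hd3 : Real.sqrt 2 - 1/v > 0 := by
    rw [gt_iff_lt, sub_pos, div_lt_iff₀ hv0]; nlinarith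
  field_simp
  linear_combination (18*v^2) * h2

lemma aux_lb (v : ℝ) (hv : 1 ≤ v) :
    Real.sqrt 2 - 1 ≤ Real.sqrt 2 * v^3 - v^2 := by
  have h1 : (1:ℝ) < Real.sqrt 2 := sqrt2_gt_one
  nlinarith [mul_nonneg (sub_nonneg.2 hv)
    (show (0:ℝ) ≤ Real.sqrt 2 * (v^2+v+1) - (v+1) by nlinarith)]

lemma rpow_sixth (u : ℝ) (hu : 0 ≤ u) (n : ℕ) :
    (u ^ ((1:ℝ)/6)) ^ n = u ^ ((n:ℝ)/6) := by
  rw [← Real.rpow_natCast (u ^ ((1:ℝ)/6)) n, ← Real.rpow_mul hu]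
  congr 1; push_cast; ring

lemma pow12 (u : ℝ) (hu : 0 < u) : u ^ ((1:ℝ)/2) = (u ^ ((1:ℝ)/6))^3 := by
  rw [rpow_sixth u hu.le 3]; norm_num

lemma pow13 (u : ℝ) (hu : 0 < u) : u ^ ((1:ℝ)/3) = (u ^ ((1:ℝ)/6))^2 := by
  rw [rpow_sixth u hu.le 2]; norm_num

lemma pow23 (u : ℝ) (hu : 0 < u) : u ^ (-(2:ℝ)/3) = 1/(u ^ ((1:ℝ)/6))^4 := by
  rw [rpow_sixth u hu.le 4, show -(2:ℝ)/3 = -((4:ℝ)/6) by norm_num, Real.rpow_neg hu.le,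
    one_div]
  norm_num

lemma pow16 (u : ℝ) (hu : 0 < u) : u ^ (-(1:ℝ)/6) = 1/(u ^ ((1:ℝ)/6)) := by
  rw [show -(1:ℝ)/6 = -((1:ℝ)/6) by norm_num, Real.rpow_neg hu.le]
  exact (one_div _).symm

def Xfun : ℝ → ℝ := fun t =>
  Real.exp (-(Real.sqrt 2) * (1 + t) ^ ((1:ℝ)/2) + (1 + t) ^ ((1:ℝ)/3))

lemma Xfun_pos (t : ℝ) : 0 < Xfun t := Real.exp_pos _

lemma one_le_v6 (t : ℝ) (ht : 0 ≤ t) : 1 ≤ (1 + t) ^ ((1:ℝ)/6) := by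
  have := Real.rpow_le_rpow (by norm_num : (0:ℝ) ≤ 1) (by linarith : (1:ℝ) ≤ 1 + t)
    (by norm_num : (0:ℝ) ≤ 1/6)
  simpa [Real.one_rpow] using this

lemma Xfun_le (t : ℝ) (ht : 0 ≤ t) : Xfun t ≤ Real.exp (-(Real.sqrt 2 - 1)) := by
  have hu : (0:ℝ) < 1 + t := by linarith
  have hv1 := one_le_v6 t ht
  rw [Xfun, Real.exp_le_exp, pow12 _ hu, pow13 _ hu]
  have := aux_lb ((1+t) ^ ((1:ℝ)/6)) hv1
  linarith

lemma Xfun_hasDerivAt (t : ℝ) (ht : 0 < 1 + t) :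
    HasDerivAt Xfun
      (Xfun t * (-(Real.sqrt 2)/2 * ((1+t) ^ ((1:ℝ)/6))⁻¹^3
        + (1/3) * ((1+t) ^ ((1:ℝ)/6))⁻¹^4)) t := by
  have hbase : HasDerivAt (fun s : ℝ => 1 + s) 1 t := (hasDerivAt_id t).const_add 1
  have h1 : HasDerivAt (fun s : ℝ => (1+s) ^ ((1:ℝ)/2))
      (((1:ℝ)/2) * (1+t) ^ ((1:ℝ)/2 - 1)) t := by
    simpa using hbase.rpow_const (Or.inl (ne_of_gt ht))
  have h2 : HasDerivAt (fun s : ℝ => (1+s) ^ ((1:ℝ)/3))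
      (((1:ℝ)/3) * (1+t) ^ ((1:ℝ)/3 - 1)) t := by
    simpa using hbase.rpow_const (Or.inl (ne_of_gt ht))
  have h3 : HasDerivAt (fun s : ℝ => -(Real.sqrt 2) * (1+s) ^ ((1:ℝ)/2) + (1+s) ^ ((1:ℝ)/3))
      (-(Real.sqrt 2) * (((1:ℝ)/2) * (1+t) ^ ((1:ℝ)/2 - 1))
        + ((1:ℝ)/3) * (1+t) ^ ((1:ℝ)/3 - 1)) t :=
    (h1.const_mul _).add h2
  have := h3.exp
  convert this using 1
  · rfl
  have hu : (0:ℝ) ≤ 1 + t := le_of_lt ht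
  have e1 : (1+t) ^ ((1:ℝ)/2 - 1) = ((1+t) ^ ((1:ℝ)/6))⁻¹^3 := by
    rw [inv_pow, ← Real.rpow_natCast ((1+t) ^ ((1:ℝ)/6)) 3, ← Real.rpow_mul hu,
      ← Real.rpow_neg hu]
    norm_num
  have e2 : (1+t) ^ ((1:ℝ)/3 - 1) = ((1+t) ^ ((1:ℝ)/6))⁻¹^4 := by
    rw [inv_pow, ← Real.rpow_natCast ((1+t) ^ ((1:ℝ)/6)) 4, ← Real.rpow_mul hu,
      ← Real.rpow_neg hu]
    norm_num
  rw [e1, e2, Xfun]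
  ring

lemma F_formula (δ : ℝ) (hδ0 : 0 < δ) (hδ1 : δ < 1) (f F : ℝ → ℝ)
    (hf : ∀ y ∈ Set.Ioo (0:ℝ) δ, f y = y / Real.log (1 / y))
    (hF : ∀ y ∈ Set.Ioc (0:ℝ) δ, F y = ∫ u in y..δ, 1 / f u) :
    ∀ y ∈ Set.Ioc (0:ℝ) δ, F y = ((Real.log y)^2 - (Real.log δ)^2)/2 := by
  intro y hy
  rw [hF y hy]
  have hyδ : y ≤ δ := hy.2
  have hy0 : 0 < y := hy.1
  have h1 : ∫ u in y..δ, 1/f u = ∫ u in y..δ, -Real.log u/u := by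
    apply intervalIntegral.integral_congr_ae
    have hae : ∀ᵐ u : ℝ, u ≠ δ := by
      rw [ae_iff]
      convert volume_singleton (a := δ) using 2
      ext u; simp
    filter_upwards [hae] with u hu hmem
    rw [Set.uIoc_of_le hyδ] at hmem
    have humem : u ∈ Set.Ioo (0:ℝ) δ :=
      ⟨lt_trans hy0 hmem.1, lt_of_le_of_ne hmem.2 hu⟩
    rw [hf u humem, one_div_div, one_div, Real.log_inv, neg_div]
  rw [h1]
  have h2 : ∫ u in y..δ, -Real.log u/u
      = (-(Real.log δ)^2/2) - (-(Real.log y)^2/2) := by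
    apply intervalIntegral.integral_eq_sub_of_hasDerivAt
    · intro u hu
      rw [Set.uIcc_of_le hyδ] at hu
      have hu0 : 0 < u := lt_of_lt_of_le hy0 hu.1
      have : HasDerivAt (fun u => -(Real.log u)^2/2)
          (-(2 * Real.log u ^ 1 * u⁻¹)/2) u := by
        exact (((Real.hasDerivAt_log (ne_of_gt hu0)).pow 2).neg).div_const 2
      exact this.congr_deriv (by ring)
    · apply ContinuousOn.intervalIntegrable
      intro u hu
      rw [Set.uIcc_of_le hyδ] at hu
      have hu0 : u ≠ 0 := ne_of_gt (lt_of_lt_of_le hy0 hu.1)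
      exact (((Real.continuousAt_log hu0).neg.div continuousAt_id hu0).continuousWithinAt)
  rw [h2]; ring


lemma sqrt2t_atTop' : Tendsto (fun t : ℝ => Real.sqrt (2*t)) atTop atTop := by
  have h := (tendsto_rpow_atTop (by norm_num : (0:ℝ) < 1/2)).comp
    (tendsto_id.const_mul_atTop two_pos)
  simpa [Real.sqrt_eq_rpow, Function.comp_def] using h

lemma sqrt_shift_atTop' (A : ℝ) (hA : 0 ≤ A) :
    Tendsto (fun t : ℝ => Real.sqrt (2*t + A)) atTop atTop := by
  apply tendsto_atTop_mono' _ _ sqrt2t_atTop'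
  filter_upwards [eventually_ge_atTop (0:ℝ)] with t ht
  exact Real.sqrt_le_sqrt (by linarith)

lemma sqrt_sub_sqrt_tendsto' (A B : ℝ) (hA : 0 ≤ A) (hB : 0 ≤ B) :
    Tendsto (fun t : ℝ => Real.sqrt (2*t + A) - Real.sqrt (2*t + B)) atTop (𝓝 0) := by
  have hden : Tendsto (fun t : ℝ => Real.sqrt (2*t+A) + Real.sqrt (2*t+B)) atTop atTop := by
    apply tendsto_atTop_mono' _ _ (sqrt_shift_atTop' A hA)
    filter_upwards with t
    nlinarith [Real.sqrt_nonneg (2*t+B)]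
  have h := (tendsto_const_nhds (x := A - B)).div_atTop hden
  apply h.congr'
  filter_upwards [eventually_ge_atTop (1:ℝ)] with t ht
  have ha : Real.sqrt (2*t+A) ^ 2 = 2*t + A := Real.sq_sqrt (by linarith)
  have hb : Real.sqrt (2*t+B) ^ 2 = 2*t + B := Real.sq_sqrt (by linarith)
  have hbpos : 0 < Real.sqrt (2*t+B) := Real.sqrt_pos.2 (by linarith)
  have hapos : 0 < Real.sqrt (2*t+A) := Real.sqrt_pos.2 (by linarith)
  rw [div_eq_iff (by positivity)]
  nlinarith

lemma sqrt_ratio_tendsto' (A B : ℝ) (hA : 0 ≤ A) (hB : 0 ≤ B) :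
    Tendsto (fun t : ℝ => Real.sqrt (2*t + A) / Real.sqrt (2*t + B)) atTop (𝓝 1) := by
  have h1 : Tendsto (fun t : ℝ =>
      1 + (Real.sqrt (2*t+A) - Real.sqrt (2*t+B)) * (Real.sqrt (2*t+B))⁻¹) atTop (𝓝 1) := by
    have := (sqrt_sub_sqrt_tendsto' A B hA hB).mul
      (sqrt_shift_atTop' B hB).inv_tendsto_atTop
    simpa using (tendsto_const_nhds (x := (1:ℝ))).add this
  apply h1.congr'
  filter_upwards [eventually_ge_atTop (1:ℝ)] with t ht
  have hbpos : 0 < Real.sqrt (2*t+B) := Real.sqrt_pos.2 (by linarith)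
  field_simp
  ring

lemma limit5' (c2 : ℝ) (hc2 : 0 ≤ c2) (g φ : ℝ → ℝ)
    (hφ : ∀ t : ℝ, 1 ≤ t → φ t = Real.exp (-Real.sqrt (2*t+c2)) / Real.sqrt (2*t+c2))
    (hg : ∀ t : ℝ, 0 ≤ t → g t =
      Real.exp (-(Real.sqrt 2) * (1 + t) ^ ((1:ℝ)/2) + (1 + t) ^ ((1:ℝ)/3)) *
        (1 + t) ^ (-(2:ℝ)/3) *
        ((5 * Real.sqrt 2 / 6 - (1/3) * (1 + t) ^ (-(1:ℝ)/6)) /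
          (Real.sqrt 2 - (1 + t) ^ (-(1:ℝ)/6)))) :
    Tendsto (fun t => g t / φ t) atTop atTop := by
  have hs2 : (0:ℝ) < Real.sqrt 2 := Real.sqrt_pos.2 (by norm_num)
  have hshift : Tendsto (fun t : ℝ => 1 + t) atTop atTop :=
    tendsto_atTop_add_const_left _ 1 tendsto_id
  have h16 : Tendsto (fun t : ℝ => (1+t) ^ (-(1:ℝ)/6)) atTop (𝓝 0) := by
    have := (tendsto_rpow_neg_atTop (by norm_num : (0:ℝ) < 1/6)).comp hshift
    simpa [Function.comp_def, neg_div] using this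
  set Q : ℝ → ℝ := fun t => (5 * Real.sqrt 2 / 6 - (1/3) * (1 + t) ^ (-(1:ℝ)/6)) /
      (Real.sqrt 2 - (1 + t) ^ (-(1:ℝ)/6)) with hQdef
  have hQ : Tendsto Q atTop (𝓝 ((5 * Real.sqrt 2 / 6) / Real.sqrt 2)) := by
    have hnum : Tendsto (fun t : ℝ => 5 * Real.sqrt 2 / 6 - (1/3) * (1+t) ^ (-(1:ℝ)/6))
        atTop (𝓝 (5 * Real.sqrt 2 / 6)) := by
      have := (tendsto_const_nhds (x := 5 * Real.sqrt 2 / 6)).sub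
        ((tendsto_const_nhds (x := (1:ℝ)/3)).mul h16)
      simpa using this
    have hden : Tendsto (fun t : ℝ => Real.sqrt 2 - (1+t) ^ (-(1:ℝ)/6))
        atTop (𝓝 (Real.sqrt 2)) := by
      have := (tendsto_const_nhds (x := Real.sqrt 2)).sub h16
      simpa using this
    exact hnum.div hden (ne_of_gt hs2)
  have hE : Tendsto (fun t : ℝ =>
      Real.exp (Real.sqrt (2*t+c2) - Real.sqrt (2*t+2))) atTop (𝓝 1) := by
    have := (Real.continuous_exp.tendsto 0).comp
      (sqrt_sub_sqrt_tendsto' c2 2 hc2 (by norm_num))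
    simpa [Function.comp_def] using this
  have hQE : Tendsto (fun t => Q t * Real.exp (Real.sqrt (2*t+c2) - Real.sqrt (2*t+2)))
      atTop (𝓝 ((5 * Real.sqrt 2 / 6) / Real.sqrt 2)) := by
    have := hQ.mul hE
    simpa using this
  have hL : (0:ℝ) < (5 * Real.sqrt 2 / 6) / Real.sqrt 2 := by positivity
  have hP : Tendsto (fun t => (Q t * Real.exp (Real.sqrt (2*t+c2) - Real.sqrt (2*t+2)))
      * Real.sqrt (2*t+c2)) atTop atTop :=
    Tendsto.pos_mul_atTop hL hQE (sqrt_shift_atTop' c2 hc2)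
  have hZ : Tendsto (fun t : ℝ =>
      Real.exp ((1+t) ^ ((1:ℝ)/3)) / ((1+t) ^ ((1:ℝ)/3))^2) atTop atTop := by
    have := (Real.tendsto_exp_div_pow_atTop 2).comp
      ((tendsto_rpow_atTop (by norm_num : (0:ℝ) < 1/3)).comp hshift)
    simpa [Function.comp_def] using this
  have hmain := hP.atTop_mul_atTop₀ hZ
  apply hmain.congr'
  filter_upwards [eventually_ge_atTop (1:ℝ)] with t ht
  have ht0 : (0:ℝ) ≤ t := by linarith
  have hu0 : (0:ℝ) < 1 + t := by linarith
  have hs : 0 < Real.sqrt (2*t+c2) := Real.sqrt_pos.2 (by linarith)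
  have e1 : Real.sqrt 2 * (1+t) ^ ((1:ℝ)/2) = Real.sqrt (2*t+2) := by
    rw [← Real.sqrt_eq_rpow, ← Real.sqrt_mul (by norm_num : (0:ℝ) ≤ 2)]
    ring_nf
  have e2 : (1+t) ^ (-(2:ℝ)/3) = (((1+t) ^ ((1:ℝ)/3))^2)⁻¹ := by
    rw [← Real.rpow_natCast ((1+t) ^ ((1:ℝ)/3)) 2, ← Real.rpow_mul hu0.le,
      show (-(2:ℝ)/3) = -((1:ℝ)/3 * (2:ℕ)) by norm_num, Real.rpow_neg hu0.le]
  have hz0 : (0:ℝ) < (1+t) ^ ((1:ℝ)/3) := Real.rpow_pos_of_pos hu0 _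
  have hsq1 : (1:ℝ) < Real.sqrt 2 := by
    nlinarith [Real.sq_sqrt (show (0:ℝ) ≤ 2 by norm_num), Real.sqrt_nonneg 2]
  have hw1 : (1+t) ^ (-(1:ℝ)/6) ≤ 1 :=
    Real.rpow_le_one_of_one_le_of_nonpos (by linarith) (by norm_num)
  have hden0 : Real.sqrt 2 - (1+t) ^ (-(1:ℝ)/6) ≠ 0 := by linarith
  have key : (Real.exp (-(Real.sqrt 2) * (1+t) ^ ((1:ℝ)/2) + (1+t) ^ ((1:ℝ)/3))
        * (1+t) ^ (-(2:ℝ)/3)) / (Real.exp (-Real.sqrt (2*t+c2)) / Real.sqrt (2*t+c2))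
      = Real.exp (Real.sqrt (2*t+c2) - Real.sqrt (2*t+2)) * Real.sqrt (2*t+c2)
        * (Real.exp ((1+t) ^ ((1:ℝ)/3)) / ((1+t) ^ ((1:ℝ)/3))^2) := by
    rw [show -(Real.sqrt 2) * (1+t) ^ ((1:ℝ)/2) + (1+t) ^ ((1:ℝ)/3)
        = (1+t) ^ ((1:ℝ)/3) - Real.sqrt 2 * (1+t) ^ ((1:ℝ)/2) by ring, e1, e2]
    rw [Real.exp_sub, Real.exp_sub, Real.exp_neg]
    field_simp
  rw [hg t ht0, hφ t ht]
  symm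
  calc Real.exp (-(Real.sqrt 2) * (1+t) ^ ((1:ℝ)/2) + (1+t) ^ ((1:ℝ)/3))
        * (1+t) ^ (-(2:ℝ)/3) * ((5 * Real.sqrt 2 / 6 - (1/3) * (1+t) ^ (-(1:ℝ)/6)) /
          (Real.sqrt 2 - (1+t) ^ (-(1:ℝ)/6)))
        / (Real.exp (-Real.sqrt (2*t+c2)) / Real.sqrt (2*t+c2))
      = ((5 * Real.sqrt 2 / 6 - (1/3) * (1+t) ^ (-(1:ℝ)/6)) /
          (Real.sqrt 2 - (1+t) ^ (-(1:ℝ)/6)))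
        * ((Real.exp (-(Real.sqrt 2) * (1+t) ^ ((1:ℝ)/2) + (1+t) ^ ((1:ℝ)/3))
          * (1+t) ^ (-(2:ℝ)/3)) / (Real.exp (-Real.sqrt (2*t+c2)) / Real.sqrt (2*t+c2))) := by
        ring
    _ = Q t * Real.exp (Real.sqrt (2*t+c2) - Real.sqrt (2*t+2)) * Real.sqrt (2*t+c2)
        * (Real.exp ((1+t) ^ ((1:ℝ)/3)) / ((1+t) ^ ((1:ℝ)/3))^2) := by
        rw [key, hQdef]; ring

lemma limit4' (c2 : ℝ) (hc2 : 0 ≤ c2) (φ : ℝ → ℝ)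
    (hφ : ∀ t : ℝ, 1 ≤ t → φ t = Real.exp (-Real.sqrt (2*t+c2)) / Real.sqrt (2*t+c2)) :
    Tendsto (fun t => φ t /
      (Real.exp (-(Real.sqrt 2) * t ^ ((1:ℝ)/2)) / (Real.sqrt 2 * t ^ ((1:ℝ)/2))))
      atTop (𝓝 1) := by
  have hexp : Tendsto (fun t : ℝ =>
      Real.exp (Real.sqrt (2*t+0) - Real.sqrt (2*t+c2))) atTop (𝓝 1) := by
    have := (Real.continuous_exp.tendsto 0).comp (sqrt_sub_sqrt_tendsto' 0 c2 le_rfl hc2)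
    simpa [Function.comp_def] using this
  have hmain := (sqrt_ratio_tendsto' 0 c2 le_rfl hc2).mul hexp
  rw [show (1:ℝ) * 1 = 1 by norm_num] at hmain
  apply hmain.congr'
  filter_upwards [eventually_ge_atTop (1:ℝ)] with t ht
  have ht0 : (0:ℝ) ≤ t := by linarith
  have e0 : (2*t + 0) = 2*t := by ring
  have e1 : Real.sqrt 2 * t ^ ((1:ℝ)/2) = Real.sqrt (2*t) := by
    rw [← Real.sqrt_eq_rpow, ← Real.sqrt_mul (by norm_num : (0:ℝ) ≤ 2)]
  have ha : 0 < Real.sqrt (2*t) := Real.sqrt_pos.2 (by linarith)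
  have hb : 0 < Real.sqrt (2*t+c2) := Real.sqrt_pos.2 (by linarith)
  rw [e0, e1, hφ t ht, Real.exp_sub, neg_mul, e1, Real.exp_neg, Real.exp_neg]
  field_simp


lemma limit6' (c2 : ℝ) :
    Tendsto (fun t : ℝ =>
      ((-(Real.sqrt 2) * (1+t) ^ ((1:ℝ)/2) + (1+t) ^ ((1:ℝ)/3))^2 - c2)/2 / t)
      atTop (𝓝 1) := by
  have h_inv : Tendsto (fun t : ℝ => t⁻¹) atTop (𝓝 0) := tendsto_inv_atTop_zero
  have h_ut : Tendsto (fun t : ℝ => (1+t) * t⁻¹) atTop (𝓝 1) := by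
    have h := h_inv.add (tendsto_const_nhds (x := (1:ℝ)))
    rw [show (0:ℝ) + 1 = 1 by norm_num] at h
    apply h.congr'
    filter_upwards [eventually_ge_atTop (1:ℝ)] with t ht
    have : t ≠ 0 := by linarith
    field_simp
  have hshift : Tendsto (fun t : ℝ => 1 + t) atTop atTop :=
    tendsto_atTop_add_const_left _ 1 tendsto_id
  have h16 : Tendsto (fun t : ℝ => (1+t) ^ (-(1:ℝ)/6)) atTop (𝓝 0) := by
    have := (tendsto_rpow_neg_atTop (by norm_num : (0:ℝ) < 1/6)).comp hshift
    simpa [Function.comp_def, neg_div] using this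
  have h13 : Tendsto (fun t : ℝ => (1+t) ^ (-(1:ℝ)/3)) atTop (𝓝 0) := by
    have := (tendsto_rpow_neg_atTop (by norm_num : (0:ℝ) < 1/3)).comp hshift
    simpa [Function.comp_def, neg_div] using this
  have hmain : Tendsto (fun t : ℝ =>
      1 + (2 - c2)/2 * t⁻¹ - Real.sqrt 2 * ((1+t) ^ (-(1:ℝ)/6) * ((1+t) * t⁻¹))
        + (1/2) * ((1+t) ^ (-(1:ℝ)/3) * ((1+t) * t⁻¹))) atTop (𝓝 1) := by
    have := (((tendsto_const_nhds (x := (1:ℝ))).add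
      ((tendsto_const_nhds (x := (2-c2)/2)).mul h_inv)).sub
      ((tendsto_const_nhds (x := Real.sqrt 2)).mul (h16.mul h_ut))).add
      ((tendsto_const_nhds (x := (1:ℝ)/2)).mul (h13.mul h_ut))
    norm_num at this
    convert this using 2
    norm_num
  apply hmain.congr'
  filter_upwards [eventually_ge_atTop (1:ℝ)] with t ht
  have ht0 : t ≠ 0 := by linarith
  have hu0 : (0:ℝ) < 1 + t := by linarith
  have h2 : Real.sqrt 2 ^ 2 = 2 := Real.sq_sqrt (by norm_num)
  have ha : ((1+t) ^ ((1:ℝ)/2))^2 = 1+t := by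
    rw [← Real.rpow_natCast ((1+t) ^ ((1:ℝ)/2)) 2, ← Real.rpow_mul hu0.le]
    norm_num
  have hb : ((1+t) ^ ((1:ℝ)/3))^2 = (1+t) ^ ((2:ℝ)/3) := by
    rw [← Real.rpow_natCast ((1+t) ^ ((1:ℝ)/3)) 2, ← Real.rpow_mul hu0.le]
    norm_num
  have hab : (1+t) ^ ((1:ℝ)/2) * (1+t) ^ ((1:ℝ)/3) = (1+t) ^ ((5:ℝ)/6) := by
    rw [← Real.rpow_add hu0]
    norm_num
  have h56 : (1+t) ^ (-(1:ℝ)/6) * (1+t) = (1+t) ^ ((5:ℝ)/6) := by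
    nth_rewrite 2 [← Real.rpow_one (1+t)]
    rw [← Real.rpow_add hu0]
    norm_num
  have h23 : (1+t) ^ (-(1:ℝ)/3) * (1+t) = (1+t) ^ ((2:ℝ)/3) := by
    nth_rewrite 2 [← Real.rpow_one (1+t)]
    rw [← Real.rpow_add hu0]
    norm_num
  have expand : (-(Real.sqrt 2) * (1+t) ^ ((1:ℝ)/2) + (1+t) ^ ((1:ℝ)/3))^2
      = 2*(1+t) - 2*Real.sqrt 2 * (1+t) ^ ((5:ℝ)/6) + (1+t) ^ ((2:ℝ)/3) := by
    have : (-(Real.sqrt 2) * (1+t) ^ ((1:ℝ)/2) + (1+t) ^ ((1:ℝ)/3))^2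
        = Real.sqrt 2^2 * ((1+t) ^ ((1:ℝ)/2))^2
          - 2*Real.sqrt 2 * ((1+t) ^ ((1:ℝ)/2) * (1+t) ^ ((1:ℝ)/3))
          + ((1+t) ^ ((1:ℝ)/3))^2 := by ring
    rw [this, h2, ha, hb, hab]
  rw [expand, ← h56, ← h23]
  field_simp
  ring

lemma f_lipschitzOn (δ : ℝ) (hδ1 : δ < 1) (f : ℝ → ℝ)
    (hf : ∀ y ∈ Set.Ioo (0:ℝ) δ, f y = y / Real.log (1 / y))
    (a b : ℝ) (ha : 0 < a) (hb : b < δ) (hab : a ≤ b) :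
    ∃ K : ℝ≥0, LipschitzOnWith K f (Set.Icc a b) := by
  set ψ : ℝ → ℝ := fun z => -((1 * Real.log z - z * z⁻¹)/(Real.log z)^2) with hψ
  have hsub : Set.Icc a b ⊆ Set.Ioo 0 δ := fun z hz => ⟨lt_of_lt_of_le ha hz.1,
    lt_of_le_of_lt hz.2 hb⟩
  have hloga : Real.log a < 0 := Real.log_neg ha (lt_of_le_of_lt hab (lt_trans hb hδ1))
  have hlogb : Real.log b < 0 := Real.log_neg (lt_of_lt_of_le ha hab) (lt_trans hb hδ1)
  set C : ℝ := (1 - Real.log a)/(Real.log b)^2 with hC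
  have hC0 : 0 ≤ C := div_nonneg (by linarith) (sq_nonneg _)
  refine ⟨C.toNNReal, ?_⟩
  apply (convex_Icc a b).lipschitzOnWith_of_nnnorm_hasDerivWithin_le
    (f' := ψ) ?_ ?_
  · intro z hz
    have hz0 : 0 < z := lt_of_lt_of_le ha hz.1
    have hzlog : Real.log z < 0 := Real.log_neg hz0 (lt_of_le_of_lt hz.2 (lt_trans hb hδ1))
    have hder : HasDerivAt (fun w => -(w / Real.log w)) (ψ z) z := by
      exact ((hasDerivAt_id z).div (Real.hasDerivAt_log (ne_of_gt hz0)) (ne_of_lt hzlog)).neg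
    apply hder.hasDerivWithinAt.congr
    · intro w hw
      have hw' := hsub hw
      rw [hf w hw', one_div, Real.log_inv, div_neg]
    · rw [hf z (hsub hz), one_div, Real.log_inv, div_neg]
  · intro z hz
    have hz0 : 0 < z := lt_of_lt_of_le ha hz.1
    have hzlog : Real.log z < 0 := Real.log_neg hz0 (lt_of_le_of_lt hz.2 (lt_trans hb hδ1))
    have hlogza : Real.log a ≤ Real.log z := Real.log_le_log ha hz.1
    have hlogzb : Real.log z ≤ Real.log b := Real.log_le_log hz0 hz.2
    rw [← NNReal.coe_le_coe, coe_nnnorm, Real.coe_toNNReal _ hC0]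
    have hψz : ψ z = (1 - Real.log z)/(Real.log z)^2 := by
      rw [hψ]
      field_simp
      ring
    rw [Real.norm_eq_abs, hψz, abs_of_nonneg (div_nonneg (by linarith) (sq_nonneg _))]
    apply div_le_div₀ (by linarith) (by linarith) (by nlinarith)
    nlinarith

lemma local_unique {v : ℝ → ℝ → ℝ} {s : Set ℝ} {K : ℝ≥0}
    (hv : ∀ t, LipschitzOnWith K (v t) s) {y x : ℝ → ℝ} {a b : ℝ} (hab : a < b)
    (hy : ContinuousOn y (Set.Icc a b))
    (hy' : ∀ t ∈ Set.Ioo a b, HasDerivAt y (v t (y t)) t)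
    (hys : ∀ t ∈ Set.Icc a b, y t ∈ s)
    (hx : ContinuousOn x (Set.Icc a b))
    (hx' : ∀ t ∈ Set.Ioo a b, HasDerivAt x (v t (x t)) t)
    (hxs : ∀ t ∈ Set.Icc a b, x t ∈ s)
    (heq : y a = x a) : ∀ t ∈ Set.Icc a b, y t = x t := by
  intro t ht
  rcases eq_or_lt_of_le ht.1 with h | hat
  · rw [← h, heq]
  have key : ∀ a' ∈ Set.Ioo a t, dist (y t) (x t)
      ≤ dist (y a') (x a') * Real.exp (K * (b - a)) := by
    intro a' ha'
    have hsub : Set.Icc a' t ⊆ Set.Icc a b := Set.Icc_subset_Icc ha'.1.le ht.2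
    have hIco : Set.Ico a' t ⊆ Set.Ioo a b := fun u hu =>
      ⟨lt_of_lt_of_le ha'.1 hu.1, lt_of_lt_of_le hu.2 ht.2⟩
    have := dist_le_of_trajectories_ODE_of_mem (v := v) (s := fun _ => s) (K := K)
      (fun u _ => hv u)
      (hy.mono hsub)
      (fun u hu => (hy' u (hIco hu)).hasDerivWithinAt)
      (fun u hu => hys u (hsub (Set.Ico_subset_Icc_self hu)))
      (hx.mono hsub)
      (fun u hu => (hx' u (hIco hu)).hasDerivWithinAt)
      (fun u hu => hxs u (hsub (Set.Ico_subset_Icc_self hu)))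
      (le_refl (dist (y a') (x a'))) t ⟨ha'.2.le, le_rfl⟩
    refine le_trans this ?_
    apply mul_le_mul_of_nonneg_left _ dist_nonneg
    apply Real.exp_le_exp.2
    have : (0:ℝ) ≤ K := K.2
    have h1 : t - a' ≤ b - a := by
      have := ha'.1; have := ht.2; linarith
    nlinarith
  have hne : (𝓝[Set.Ioo a t] a).NeBot := left_nhdsWithin_Ioo_neBot hat
  have hlim : Tendsto (fun a' => dist (y a') (x a') * Real.exp (K * (b - a)))
      (𝓝[Set.Ioo a t] a) (𝓝 0) := by
    have hd : Tendsto (fun a' => dist (y a') (x a')) (𝓝[Set.Icc a b] a) (𝓝 0) := by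
      have hc := (hy.continuousWithinAt (Set.left_mem_Icc.2 hab.le)).dist
        (hx.continuousWithinAt (Set.left_mem_Icc.2 hab.le))
      rwa [heq, dist_self] at hc
    have hmono : 𝓝[Set.Ioo a t] a ≤ 𝓝[Set.Icc a b] a :=
      nhdsWithin_mono a (fun u hu => ⟨hu.1.le, le_trans hu.2.le ht.2⟩)
    have := (hd.mono_left hmono).mul_const (Real.exp (K * (b - a)))
    simpa using this
  have hd0 : dist (y t) (x t) ≤ 0 :=
    ge_of_tendsto hlim (eventually_nhdsWithin_of_forall key)
  exact dist_le_zero.1 hd0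

/-- Example 2.1: with `δ ∈ (e^{-(√2-1)}, 1)`, `f(x) = x/log(1/x)` on `(0,δ)`, `f(0)=0`,
and the given perturbation `g`, the function `x(t) = exp(-√2(1+t)^{1/2}+(1+t)^{1/3})`
is the unique continuous solution of `x' = -f(x)+g`, `x(0) = e^{-(√2-1)}`; moreover
`(f∘F⁻¹)(t) ~ e^{-√2 t^{1/2}}/(√2 t^{1/2})`, `g(t)/(f∘F⁻¹)(t) → +∞`, and yet
`F(x(t))/t → 1`. -/
theorem stmt_14 (δ : ℝ) (hδ : δ ∈ Set.Ioo (Real.exp (-(Real.sqrt 2 - 1))) 1)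
    (f g F Finv x : ℝ → ℝ)
    (hf : ∀ y ∈ Set.Ioo (0:ℝ) δ, f y = y / Real.log (1 / y)) (hf_zero : f 0 = 0)
    (hg : ∀ t : ℝ, 0 ≤ t → g t =
      Real.exp (-(Real.sqrt 2) * (1 + t) ^ ((1:ℝ)/2) + (1 + t) ^ ((1:ℝ)/3)) *
        (1 + t) ^ (-(2:ℝ)/3) *
        ((5 * Real.sqrt 2 / 6 - (1/3) * (1 + t) ^ (-(1:ℝ)/6)) /
          (Real.sqrt 2 - (1 + t) ^ (-(1:ℝ)/6))))
    (hxdef : ∀ t : ℝ, 0 ≤ t →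
      x t = Real.exp (-(Real.sqrt 2) * (1 + t) ^ ((1:ℝ)/2) + (1 + t) ^ ((1:ℝ)/3)))
    (hF : ∀ y ∈ Set.Ioc (0:ℝ) δ, F y = ∫ u in y..δ, 1 / f u)
    (hFinv : ∀ t : ℝ, 0 ≤ t → Finv t ∈ Set.Ioc (0:ℝ) δ ∧ F (Finv t) = t) :
    (∀ t : ℝ, 0 ≤ t → 0 < g t) ∧
    IsSol f g (Real.exp (-(Real.sqrt 2 - 1))) x ∧
    (∀ y : ℝ → ℝ, IsSol f g (Real.exp (-(Real.sqrt 2 - 1))) y →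
      ∀ t : ℝ, 0 ≤ t → y t = x t) ∧
    Tendsto (fun t => f (Finv t) /
      (Real.exp (-(Real.sqrt 2) * t ^ ((1:ℝ)/2)) / (Real.sqrt 2 * t ^ ((1:ℝ)/2))))
      atTop (nhds 1) ∧
    Tendsto (fun t => g t / f (Finv t)) atTop atTop ∧
    Tendsto (fun t => F (x t) / t) atTop (nhds 1) := by
  obtain ⟨hδl, hδu⟩ := hδ
  have hδ0 : 0 < δ := lt_trans (Real.exp_pos _) hδl
  have hsq1 : (1:ℝ) < Real.sqrt 2 := sqrt2_gt_one
  -- x agrees with Xfun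
  have hxX : ∀ t : ℝ, 0 ≤ t → x t = Xfun t := fun t ht => hxdef t ht
  have hXmem : ∀ t : ℝ, 0 ≤ t → Xfun t ∈ Set.Ioo 0 δ := fun t ht =>
    ⟨Xfun_pos t, lt_of_le_of_lt (Xfun_le t ht) hδl⟩
  -- positivity of g
  have hgpos : ∀ t : ℝ, 0 ≤ t → 0 < g t := by
    intro t ht
    rw [hg t ht]
    have hu1 : (1:ℝ) ≤ 1 + t := by linarith
    have hu0 : (0:ℝ) < 1 + t := by linarith
    have hw0 : 0 < (1+t) ^ (-(1:ℝ)/6) := Real.rpow_pos_of_pos hu0 _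
    have hw1 : (1+t) ^ (-(1:ℝ)/6) ≤ 1 :=
      Real.rpow_le_one_of_one_le_of_nonpos hu1 (by norm_num)
    apply mul_pos (mul_pos (Real.exp_pos _) (Real.rpow_pos_of_pos hu0 _))
    apply div_pos <;> nlinarith
  -- the ODE identity
  have hkey : ∀ t : ℝ, 0 ≤ t → -f (Xfun t) + g t
      = Xfun t * (-(Real.sqrt 2)/2 * ((1+t) ^ ((1:ℝ)/6))⁻¹^3
        + (1/3) * ((1+t) ^ ((1:ℝ)/6))⁻¹^4) := by
    intro t ht
    have hu0 : (0:ℝ) < 1 + t := by linarith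
    have hv1 : 1 ≤ (1+t) ^ ((1:ℝ)/6) := one_le_v6 t ht
    have hv0 : (0:ℝ) < (1+t) ^ ((1:ℝ)/6) := by linarith
    set v : ℝ := (1+t) ^ ((1:ℝ)/6) with hvdef
    have hlog : Real.log (1 / Xfun t) = Real.sqrt 2 * v^3 - v^2 := by
      rw [one_div, Real.log_inv, Xfun, Real.log_exp, pow12 _ hu0, pow13 _ hu0]
      ring
    have hd2 : Real.sqrt 2 * v^3 - v^2 > 0 := by
      nlinarith [mul_pos (pow_pos hv0 2) (show Real.sqrt 2 * v - 1 > 0 by nlinarith)]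
    have hfx : f (Xfun t) = Xfun t * (1/(Real.sqrt 2 * v^3 - v^2)) := by
      rw [hf (Xfun t) (hXmem t ht), hlog]
      ring
    have hgt : g t = Xfun t * ((1/v^4) *
        ((5 * Real.sqrt 2 / 6 - (1/3) * (1/v)) / (Real.sqrt 2 - 1/v))) := by
      rw [hg t ht, pow23 _ hu0, pow16 _ hu0, Xfun]
      ring
    rw [hfx, hgt]
    have := aux_ident v hv1
    have hinv3 : v⁻¹^3 = 1/v^3 := by
      rw [inv_pow, one_div]
    have hinv4 : v⁻¹^4 = 1/v^4 := by
      rw [inv_pow, one_div]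
    rw [hinv3, hinv4]
    calc -(Xfun t * (1/(Real.sqrt 2 * v^3 - v^2))) + Xfun t * ((1/v^4) *
        ((5 * Real.sqrt 2 / 6 - (1/3) * (1/v)) / (Real.sqrt 2 - 1/v)))
        = Xfun t * (-(1/(Real.sqrt 2 * v^3 - v^2)) + (1/v^4) *
          ((5 * Real.sqrt 2 / 6 - (1/3) * (1/v)) / (Real.sqrt 2 - 1/v))) := by ring
      _ = Xfun t * (-(Real.sqrt 2)/2 * (1/v^3) + (1/3) * (1/v^4)) := by rw [this]
  -- x is a solution
  have hXc : ContinuousOn Xfun (Set.Ici 0) := fun s hs =>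
    (Xfun_hasDerivAt s (by simp only [Set.mem_Ici] at hs; linarith)).continuousAt.continuousWithinAt
  have hxc : ContinuousOn x (Set.Ici 0) := hXc.congr hxX
  have hx0 : x 0 = Real.exp (-(Real.sqrt 2 - 1)) := by
    rw [hxdef 0 le_rfl, show (1:ℝ) + 0 = 1 by norm_num, Real.one_rpow, Real.one_rpow]
    congr 1
    ring
  have hxder : ∀ t : ℝ, 0 < t → HasDerivAt x (-f (x t) + g t) t := by
    intro t ht
    have hD := Xfun_hasDerivAt t (by linarith)
    have hxXev : x =ᶠ[nhds t] Xfun := by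
      filter_upwards [isOpen_Ioi.mem_nhds (Set.mem_Ioi.2 ht)] with s hs
      exact hxX s (le_of_lt hs)
    have hDx := hD.congr_of_eventuallyEq hxXev
    have : -f (x t) + g t = Xfun t * (-(Real.sqrt 2)/2 * ((1+t) ^ ((1:ℝ)/6))⁻¹^3
        + (1/3) * ((1+t) ^ ((1:ℝ)/6))⁻¹^4) := by
      rw [hxX t ht.le]
      exact hkey t ht.le
    rw [this]
    exact hDx
  have hXsol : IsSol f g (Real.exp (-(Real.sqrt 2 - 1))) x := ⟨hxc, hx0, hxder⟩
  -- uniqueness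
  have huniq : ∀ y : ℝ → ℝ, IsSol f g (Real.exp (-(Real.sqrt 2 - 1))) y →
      ∀ t : ℝ, 0 ≤ t → y t = x t := by
    intro y hy
    obtain ⟨hyc, hy0v, hy'⟩ := hy
    -- extension step
    have hstep : ∀ T : ℝ, 0 ≤ T → y T = x T →
        ∃ ε > 0, ∀ s ∈ Set.Icc T (T+ε), y s = x s := by
      intro T hT hyxT
      have hxTm : x T ∈ Set.Ioo 0 δ := by
        rw [hxX T hT]; exact hXmem T hT
      set a : ℝ := x T / 2 with hadef
      set b : ℝ := (x T + δ)/2 with hbdef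
      have ha0 : 0 < a := by simp only [hadef]; linarith [hxTm.1]
      have haxT : a < x T := by simp only [hadef]; linarith [hxTm.1]
      have hxTb : x T < b := by simp only [hbdef]; linarith [hxTm.2]
      have hbδ : b < δ := by simp only [hbdef]; linarith [hxTm.2]
      have hab : a < b := lt_trans haxT hxTb
      obtain ⟨K, hK⟩ := f_lipschitzOn δ hδu f hf a b ha0 hbδ hab.le
      have hv : ∀ s : ℝ, LipschitzOnWith K (fun z => -f z + g s) (Set.Icc a b) := by
        intro s z hz w hw
        have e : edist (-f z + g s) (-f w + g s) = edist (f z) (f w) := by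
          rw [edist_dist, edist_dist, dist_add_right, dist_neg_neg]
        rw [e]
        exact hK hz hw
      have hyT : ContinuousWithinAt y (Set.Ici 0) T := hyc.continuousWithinAt hT
      have hxT : ContinuousWithinAt x (Set.Ici 0) T := hxc.continuousWithinAt hT
      have hOmem : Set.Ioo a b ∈ nhds (x T) := Ioo_mem_nhds haxT hxTb
      have hevy : ∀ᶠ s in nhdsWithin T (Set.Ici 0), y s ∈ Set.Ioo a b := by
        apply hyT
        rw [hyxT]
        exact hOmem
      have hevx : ∀ᶠ s in nhdsWithin T (Set.Ici 0), x s ∈ Set.Ioo a b := hxT hOmem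
      obtain ⟨ε, hε, hball⟩ := Metric.mem_nhdsWithin_iff.1 (hevy.and hevx)
      refine ⟨ε/2, by positivity, ?_⟩
      have hsubset : Set.Icc T (T+ε/2) ⊆ Metric.ball T ε ∩ Set.Ici 0 := by
        intro s hs
        constructor
        · rw [Metric.mem_ball, Real.dist_eq, abs_of_nonneg (by linarith [hs.1])]
          linarith [hs.2]
        · exact Set.mem_Ici.2 (le_trans hT hs.1)
      have hmem2 : ∀ s ∈ Set.Icc T (T+ε/2),
          y s ∈ Set.Icc a b ∧ x s ∈ Set.Icc a b := by
        intro s hs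
        have := hball (hsubset hs)
        exact ⟨Set.Ioo_subset_Icc_self this.1, Set.Ioo_subset_Icc_self this.2⟩
      have hII : Set.Icc T (T+ε/2) ⊆ Set.Ici 0 := fun s hs => le_trans hT hs.1
      exact local_unique hv (by linarith : T < T + ε/2)
        (hyc.mono hII)
        (fun u hu => hy' u (lt_of_le_of_lt hT hu.1))
        (fun u hu => (hmem2 u hu).1)
        (hxc.mono hII)
        (fun u hu => hxder u (lt_of_le_of_lt hT hu.1))
        (fun u hu => (hmem2 u hu).2)
        hyxT
    -- sup argument
    intro t ht
    by_contra hne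
    set B : Set ℝ := {r : ℝ | r ∈ Set.Icc 0 t ∧ ∀ s ∈ Set.Icc 0 r, y s = x s} with hB
    have h0B : (0:ℝ) ∈ B := by
      refine ⟨⟨le_rfl, ht⟩, fun s hs => ?_⟩
      have hs0 : s = 0 := le_antisymm hs.2 hs.1
      rw [hs0, hy0v, hx0]
    have hBne : B.Nonempty := ⟨0, h0B⟩
    have hbdd : BddAbove B := ⟨t, fun r hr => hr.1.2⟩
    set T : ℝ := sSup B with hT
    have hTmem : T ∈ Set.Icc 0 t := ⟨le_csSup hbdd h0B, csSup_le hBne fun r hr => hr.1.2⟩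
    have hyx_lt : ∀ s : ℝ, 0 ≤ s → s < T → y s = x s := by
      intro s hs0 hsT
      obtain ⟨r, hrB, hsr⟩ := exists_lt_of_lt_csSup hBne hsT
      exact hrB.2 s ⟨hs0, hsr.le⟩
    have hyxT : y T = x T := by
      rcases eq_or_lt_of_le hTmem.1 with h | h
      · rw [← h, hy0v, hx0]
      · haveI hnb : (nhdsWithin T (Set.Ico 0 T)).NeBot := by
          apply mem_closure_iff_nhdsWithin_neBot.1
          rw [closure_Ico (ne_of_lt h)]
          exact ⟨h.le, le_rfl⟩
        have hsub : Set.Ico 0 T ⊆ Set.Ici 0 := fun u hu => hu.1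
        have hyTt : Tendsto y (nhdsWithin T (Set.Ico 0 T)) (nhds (y T)) :=
          (hyc.continuousWithinAt hTmem.1).mono_left (nhdsWithin_mono _ hsub)
        have hxTt : Tendsto x (nhdsWithin T (Set.Ico 0 T)) (nhds (x T)) :=
          (hxc.continuousWithinAt hTmem.1).mono_left (nhdsWithin_mono _ hsub)
        have hxy : Tendsto y (nhdsWithin T (Set.Ico 0 T)) (nhds (x T)) := by
          apply hxTt.congr'
          apply eventually_nhdsWithin_of_forall
          intro s hs
          exact (hyx_lt s hs.1 hs.2).symm
        exact tendsto_nhds_unique hyTt hxy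
    have hTB : T ∈ B := by
      refine ⟨hTmem, fun s hs => ?_⟩
      rcases eq_or_lt_of_le hs.2 with h | h
      · rw [h]; exact hyxT
      · exact hyx_lt s hs.1 h
    have hTlt : T < t := by
      rcases eq_or_lt_of_le hTmem.2 with h | h
      · exact absurd (h ▸ hTB.2 t ⟨ht, h.ge⟩) hne
      · exact h
    obtain ⟨ε, hε, hext⟩ := hstep T hTmem.1 hyxT
    have hT'B : min (T+ε) t ∈ B := by
      constructor
      · exact ⟨le_trans hTmem.1 (le_min (by linarith) hTlt.le), min_le_right _ _⟩
      · intro s hs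
        rcases le_or_gt s T with h | h
        · exact hTB.2 s ⟨hs.1, h⟩
        · exact hext s ⟨h.le, le_trans hs.2 (min_le_left _ _)⟩
    have h1 : min (T+ε) t ≤ T := le_csSup hbdd hT'B
    have h2 : T < min (T+ε) t := lt_min (by linarith) hTlt
    linarith
  -- the limits
  have hFform := F_formula δ hδ0 hδu f F hf hF
  set c2 : ℝ := (Real.log δ)^2 with hc2def
  have hc2 : 0 ≤ c2 := sq_nonneg _
  have hlogδ : Real.log δ < 0 := Real.log_neg hδ0 hδu
  have hsqc2 : Real.sqrt c2 = -Real.log δ := by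
    rw [hc2def, show (Real.log δ)^2 = (-Real.log δ)^2 by ring,
      Real.sqrt_sq (by linarith)]
  have hlogFinv : ∀ t : ℝ, 0 ≤ t → Real.log (Finv t) = -Real.sqrt (2*t + c2) := by
    intro t ht
    obtain ⟨hm, hFt⟩ := hFinv t ht
    rw [hFform _ hm] at hFt
    have hsq : (Real.log (Finv t))^2 = 2*t + c2 := by
      rw [hc2def]; linarith
    have hle : Real.log (Finv t) ≤ Real.log δ := Real.log_le_log hm.1 hm.2
    have : Real.sqrt (2*t + c2) = -Real.log (Finv t) := by
      rw [← hsq, show (Real.log (Finv t))^2 = (-Real.log (Finv t))^2 by ring,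
        Real.sqrt_sq (by linarith)]
    linarith
  have hfFinv : ∀ t : ℝ, 1 ≤ t →
      f (Finv t) = Real.exp (-Real.sqrt (2*t + c2)) / Real.sqrt (2*t + c2) := by
    intro t ht
    have ht0 : (0:ℝ) ≤ t := by linarith
    obtain ⟨hm, _⟩ := hFinv t ht0
    have hlt : Finv t < δ := by
      rw [← Real.exp_log hm.1, ← Real.exp_log hδ0]
      apply Real.exp_lt_exp.2
      rw [hlogFinv t ht0]
      have h1 : Real.sqrt c2 < Real.sqrt (2*t + c2) :=
        Real.sqrt_lt_sqrt hc2 (by linarith)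
      rw [hsqc2] at h1
      linarith
    have hmem : Finv t ∈ Set.Ioo (0:ℝ) δ := ⟨hm.1, hlt⟩
    have hs0 : 0 < Real.sqrt (2*t + c2) := Real.sqrt_pos.2 (by linarith)
    rw [hf _ hmem, one_div, Real.log_inv, hlogFinv t ht0, neg_neg,
      ← Real.exp_log hm.1, hlogFinv t ht0]
  refine ⟨hgpos, hXsol, huniq, ?_, ?_, ?_⟩
  · exact limit4' c2 hc2 (fun t => f (Finv t)) hfFinv
  · exact limit5' c2 hc2 g (fun t => f (Finv t)) hfFinv hg
  · have hmain := limit6' c2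
    apply hmain.congr'
    filter_upwards [eventually_ge_atTop (1:ℝ)] with t ht
    have ht0 : (0:ℝ) ≤ t := by linarith
    have hxm : x t ∈ Set.Ioc 0 δ := by
      rw [hxX t ht0]
      exact Set.Ioo_subset_Ioc_self (hXmem t ht0)
    rw [hFform _ hxm, hxdef t ht0, Real.log_exp]
end
end

section
/- Let β > 1, θ > β/(β-1), ξ ∈ (0, (θ-1)^{1/(β-1)}), f(x) = sgn(x)|x|^β, and g(t) = -(1+t)^{-θ}·(ξ(θ-1) - ξ^β(1+t)^{-β(θ-1)+θ}) for t ≥ 0, so that g(t) < 0 for all t ≥ 0. Then the unique continuous solution of x'(t) = -f(x(t)) + g(t), t > 0, x(0) = ξ, is x(t) = ξ(1+t)^{-(θ-1)}; moreover, with F(x) = ∫_x^1 du/f(u) = (x^{1-β}-1)/(β-1), one has (f∘F⁻¹)(t) ~ ((β-1)t)^{-β/(β-1)} as t → ∞, lim_{t→∞} g(t)/(f∘F⁻¹)(t) = 0, and yet lim_{t→∞} F(x(t))/t = +∞. -/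
open Filter Real Set Topology MeasureTheory

noncomputable section

lemma fsign_deriv {β : ℝ} (hβ : 1 < β) (z : ℝ) :
    HasDerivAt (fun y : ℝ => Real.sign y * |y| ^ β) (β * |z| ^ (β - 1)) z := by
  rcases lt_trichotomy z 0 with hz | hz | hz
  · have h1 : HasDerivAt (fun y : ℝ => (-y) ^ β) (β * (-z) ^ (β - 1) * (-1)) z := by
      have := (Real.hasDerivAt_rpow_const (x := -z) (p := β) (Or.inl (by linarith))).comp z
        ((hasDerivAt_id z).neg)
      simpa [Function.comp_def] using this
    have h2 : HasDerivAt (fun y : ℝ => -((-y) ^ β)) (β * (-z) ^ (β - 1)) z := by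
      have := h1.neg; simp only [mul_neg, mul_one, neg_neg] at this; exact this
    refine h2.congr_of_eventuallyEq ?_ |>.congr_deriv ?_
    · filter_upwards [Iio_mem_nhds hz] with y hy
      rw [Real.sign_of_neg hy, abs_of_neg hy]; ring
    · rw [abs_of_neg hz]
  · subst hz
    rw [hasDerivAt_iff_tendsto_slope]
    have : Tendsto (fun h : ℝ => |h| ^ (β - 1)) (𝓝[≠] 0) (𝓝 0) := by
      have hc : Continuous (fun h : ℝ => |h| ^ (β - 1)) :=
        continuous_abs.rpow_const (fun x => Or.inr (by linarith))
      have := hc.tendsto 0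
      simpa [Real.zero_rpow (by linarith : β - 1 ≠ 0)] using this.mono_left nhdsWithin_le_nhds
    have heq : (fun h : ℝ => |h| ^ (β - 1)) =ᶠ[𝓝[≠] (0:ℝ)]
        slope (fun y : ℝ => Real.sign y * |y| ^ β) 0 := by
      filter_upwards [self_mem_nhdsWithin] with h hh
      have hh' : (h:ℝ) ≠ 0 := hh
      rw [slope_def_field]
      field_simp [div_eq_iff hh']
      simp only [Real.sign_zero, zero_mul, sub_zero]
      rcases lt_or_gt_of_ne hh' with h0 | h0
      · rw [Real.sign_of_neg h0, abs_of_neg h0]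
        rw [show β = (β - 1) + 1 by ring, Real.rpow_add (by linarith : (0:ℝ) < -h),
          Real.rpow_one]; ring
      · rw [Real.sign_of_pos h0, abs_of_pos h0]
        rw [show β = (β - 1) + 1 by ring, Real.rpow_add h0, Real.rpow_one]; ring
    have := this.congr' heq
    simpa [Real.zero_rpow (by linarith : β - 1 ≠ 0)] using this
  · have h1 : HasDerivAt (fun y : ℝ => y ^ β) (β * z ^ (β - 1)) z :=
      Real.hasDerivAt_rpow_const (Or.inl (ne_of_gt hz))
    refine h1.congr_of_eventuallyEq ?_ |>.congr_deriv ?_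
    · filter_upwards [Ioi_mem_nhds hz] with y hy
      rw [Real.sign_of_pos hy, abs_of_pos hy]; ring
    · rw [abs_of_pos hz]

lemma fsign_lip {β : ℝ} (hβ : 1 < β) {R : ℝ} (hR : 0 ≤ R) :
    LipschitzOnWith ⟨β * R ^ (β - 1), by positivity⟩
      (fun y : ℝ => Real.sign y * |y| ^ β) (Metric.closedBall 0 R) := by
  apply (convex_closedBall (0:ℝ) R).lipschitzOnWith_of_nnnorm_deriv_le
    (fun z _ => (fsign_deriv hβ z).differentiableAt)
  intro z hz
  rw [(fsign_deriv hβ z).deriv]; apply NNReal.coe_le_coe.mp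
  simp only [coe_nnnorm, NNReal.coe_mk, Real.norm_eq_abs]
  rw [abs_of_nonneg (by positivity)]
  have hzR : |z| ≤ R := by simpa [Real.dist_eq] using hz
  exact mul_le_mul_of_nonneg_left
    (Real.rpow_le_rpow (abs_nonneg z) hzR (by linarith)) (by linarith)

lemma sol_unique {β : ℝ} (hβ : 1 < β) {f g : ℝ → ℝ} {ξ : ℝ}
    (hf : ∀ y : ℝ, f y = Real.sign y * |y| ^ β)
    {x y : ℝ → ℝ}
    (hxc : ContinuousOn x (Ici 0)) (hx0 : x 0 = ξ)
    (hxd : ∀ t : ℝ, 0 < t → HasDerivAt x (-f (x t) + g t) t)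
    (hyc : ContinuousOn y (Ici 0)) (hy0 : y 0 = ξ)
    (hyd : ∀ t : ℝ, 0 < t → HasDerivAt y (-f (y t) + g t) t)
    {t : ℝ} (ht : 0 ≤ t) : y t = x t := by
  rcases eq_or_lt_of_le ht with rfl | ht
  · rw [hx0, hy0]
  obtain ⟨Cy, hCy⟩ := (isCompact_Icc (a := (0:ℝ)) (b := t)).exists_bound_of_continuousOn
    (hyc.mono (Icc_subset_Ici_self))
  obtain ⟨Cx, hCx⟩ := (isCompact_Icc (a := (0:ℝ)) (b := t)).exists_bound_of_continuousOn
    (hxc.mono (Icc_subset_Ici_self))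
  set R : ℝ := max Cy Cx with hRdef
  have hR : 0 ≤ R := le_trans (norm_nonneg (y 0)) (le_trans (hCy 0 ⟨le_rfl, ht.le⟩) (le_max_left _ _))
  set K : NNReal := ⟨β * R ^ (β - 1), by positivity⟩ with hK
  have hv : ∀ τ : ℝ, LipschitzOnWith K (fun z => -f z + g τ) (Metric.closedBall (0:ℝ) R) := by
    intro τ
    have l1 : LipschitzWith 1 (fun w : ℝ => -w + g τ) := by
      apply LipschitzWith.of_dist_le_mul
      intro a b
      apply le_of_eq
      simp only [Real.dist_eq, NNReal.coe_one, one_mul]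
      rw [show -a + g τ - (-b + g τ) = -(a - b) by ring, abs_neg]
    have comp : (fun z : ℝ => -f z + g τ)
        = (fun w : ℝ => -w + g τ) ∘ (fun z => Real.sign z * |z| ^ β) := by
      funext z; simp [hf z]
    rw [comp, show K = 1 * K by rw [one_mul]]
    exact l1.comp_lipschitzOnWith (fsign_lip hβ hR)
  -- for each a ∈ (0, t], Gronwall bound
  have key : ∀ a ∈ Ioc (0:ℝ) t, dist (y t) (x t) ≤ dist (y a) (x a) * Real.exp (K * (t - a)) := by
    intro a ha
    have hsub : Icc a t ⊆ Ici (0:ℝ) := fun s hs => le_trans ha.1.le hs.1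
    refine dist_le_of_trajectories_ODE_of_mem (v := fun τ z => -f z + g τ) (fun τ _ => hv τ)
      (hyc.mono hsub)
      (fun s hs => (hyd s (lt_of_lt_of_le ha.1 hs.1)).hasDerivWithinAt)
      (fun s hs => ?_)
      (hxc.mono hsub)
      (fun s hs => (hxd s (lt_of_lt_of_le ha.1 hs.1)).hasDerivWithinAt)
      (fun s hs => ?_) le_rfl t ⟨ha.2, le_rfl⟩
    · simp only [Metric.mem_closedBall, Real.dist_eq, sub_zero]
      calc |y s| = ‖y s‖ := rfl
        _ ≤ Cy := hCy s ⟨le_trans ha.1.le hs.1, hs.2.le⟩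
        _ ≤ R := le_max_left _ _
    · simp only [Metric.mem_closedBall, Real.dist_eq, sub_zero]
      calc |x s| = ‖x s‖ := rfl
        _ ≤ Cx := hCx s ⟨le_trans ha.1.le hs.1, hs.2.le⟩
        _ ≤ R := le_max_right _ _
  -- take a → 0⁺
  have hlim : Tendsto (fun a => dist (y a) (x a) * Real.exp (K * (t - a)))
      (𝓝[>] (0:ℝ)) (𝓝 0) := by
    have hd : Tendsto (fun a => dist (y a) (x a)) (𝓝[>] (0:ℝ)) (𝓝 0) := by
      have h1 : Tendsto y (𝓝[>] (0:ℝ)) (𝓝 ξ) := by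
        have := (hyc 0 self_mem_Ici).tendsto
        rw [hy0] at this
        exact this.mono_left (nhdsWithin_mono 0 Ioi_subset_Ici_self)
      have h2 : Tendsto x (𝓝[>] (0:ℝ)) (𝓝 ξ) := by
        have := (hxc 0 self_mem_Ici).tendsto
        rw [hx0] at this
        exact this.mono_left (nhdsWithin_mono 0 Ioi_subset_Ici_self)
      have := (h1.dist h2)
      simpa using this
    have he : Tendsto (fun a => Real.exp ((K:ℝ) * (t - a))) (𝓝[>] (0:ℝ))
        (𝓝 (Real.exp ((K:ℝ) * t))) := by
      have : ContinuousAt (fun a : ℝ => Real.exp ((K:ℝ) * (t - a))) 0 := by fun_prop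
      simpa using this.tendsto.mono_left nhdsWithin_le_nhds
    simpa using hd.mul he
  have : dist (y t) (x t) ≤ 0 := by
    refine ge_of_tendsto hlim ?_
    filter_upwards [Ioc_mem_nhdsGT ht] with a ha using key a ha
  exact dist_le_zero.mp this

/-- Example 3.1: with `β > 1`, `θ > β/(β-1)`, `ξ ∈ (0,(θ-1)^{1/(β-1)})`,
`f(x) = sgn(x)|x|^β` and the given negative perturbation `g`, the unique continuous
solution of `x' = -f(x) + g`, `x(0) = ξ`, is `x(t) = ξ(1+t)^{-(θ-1)}`; moreover
`F(x) = (x^{1-β}-1)/(β-1)`, `(f∘F⁻¹)(t) ~ ((β-1)t)^{-β/(β-1)}`,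
`g(t)/(f∘F⁻¹)(t) → 0`, and yet `F(x(t))/t → +∞`. -/
theorem stmt_16 (β θ ξ : ℝ) (hβ : 1 < β) (hθ : β / (β - 1) < θ)
    (hξ : ξ ∈ Set.Ioo (0:ℝ) ((θ - 1) ^ ((1:ℝ) / (β - 1))))
    (f g F Finv x : ℝ → ℝ)
    (hf : ∀ y : ℝ, f y = Real.sign y * |y| ^ β)
    (hg : ∀ t : ℝ, 0 ≤ t → g t =
      -((1 + t) ^ (-θ) * (ξ * (θ - 1) - ξ ^ β * (1 + t) ^ (-(β * (θ - 1)) + θ))))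
    (hxdef : ∀ t : ℝ, 0 ≤ t → x t = ξ * (1 + t) ^ (-(θ - 1)))
    (hF : ∀ y : ℝ, 0 < y → F y = ∫ u in y..(1:ℝ), 1 / f u)
    (hFinv : ∀ t : ℝ, 0 ≤ t → 0 < Finv t ∧ F (Finv t) = t) :
    (∀ t : ℝ, 0 ≤ t → g t < 0) ∧
    IsSol f g ξ x ∧
    (∀ y : ℝ → ℝ, IsSol f g ξ y → ∀ t : ℝ, 0 ≤ t → y t = x t) ∧
    (∀ y : ℝ, 0 < y → F y = (y ^ (1 - β) - 1) / (β - 1)) ∧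
    Tendsto (fun t => f (Finv t) / ((β - 1) * t) ^ (-β / (β - 1))) atTop (nhds 1) ∧
    Tendsto (fun t => g t / f (Finv t)) atTop (nhds 0) ∧
    Tendsto (fun t => F (x t) / t) atTop atTop := by
  have hβ1 : (0:ℝ) < β - 1 := by linarith
  have hθβ : 1 < β / (β - 1) := (one_lt_div hβ1).mpr (by linarith)
  have hθ1 : 1 < θ := lt_trans hθβ hθ
  have hθ1' : (0:ℝ) < θ - 1 := by linarith
  have hξ0 : 0 < ξ := hξ.1
  -- ξ^(β-1) < θ - 1
  have hξβ1 : ξ ^ (β - 1) < θ - 1 := by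
    have h := Real.rpow_lt_rpow hξ0.le hξ.2 hβ1
    rwa [← Real.rpow_mul hθ1'.le, one_div,
      inv_mul_cancel₀ (ne_of_gt hβ1), Real.rpow_one] at h
  -- f on positives
  have hfpos : ∀ z : ℝ, 0 < z → f z = z ^ β := by
    intro z hz
    rw [hf z, Real.sign_of_pos hz, abs_of_pos hz, one_mul]
  -- part 1
  have part1 : ∀ t : ℝ, 0 ≤ t → g t < 0 := by
    intro t ht
    have hu : (1:ℝ) ≤ 1 + t := by linarith
    have hu0 : (0:ℝ) < 1 + t := by linarith
    rw [hg t ht, neg_lt_zero]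
    apply mul_pos (Real.rpow_pos_of_pos hu0 _)
    have he : -(β * (θ - 1)) + θ ≤ 0 := by
      have : β < θ * (β - 1) := (div_lt_iff₀ hβ1).mp hθ
      nlinarith
    have h1 : (1 + t) ^ (-(β * (θ - 1)) + θ) ≤ 1 :=
      Real.rpow_le_one_of_one_le_of_nonpos hu he
    have h3 : ξ ^ β * (1 + t) ^ (-(β * (θ - 1)) + θ) ≤ ξ ^ β :=
      mul_le_of_le_one_right (Real.rpow_pos_of_pos hξ0 β).le h1
    have h4 : ξ ^ β < ξ * (θ - 1) := by
      rw [show β = (β - 1) + 1 by ring, Real.rpow_add_one hξ0.ne']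
      nlinarith
    linarith
  -- part 2
  have hxcont : ContinuousOn x (Ici 0) := by
    have hform : ContinuousOn (fun t : ℝ => ξ * (1 + t) ^ (-(θ - 1))) (Ici 0) := by
      apply ContinuousOn.mul continuousOn_const
      apply ContinuousOn.rpow_const ((continuous_const.add continuous_id).continuousOn)
      intro t ht
      exact Or.inl (by have : (0:ℝ) ≤ t := ht; show (1:ℝ) + t ≠ 0; positivity)
    exact hform.congr (fun t ht => hxdef t ht)
  have hx0 : x 0 = ξ := by
    rw [hxdef 0 le_rfl]; simp
  have hxpos : ∀ t : ℝ, 0 ≤ t → 0 < x t := by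
    intro t ht
    rw [hxdef t ht]
    have : (0:ℝ) < 1 + t := by linarith
    positivity
  have hxderiv : ∀ t : ℝ, 0 < t → HasDerivAt x (-f (x t) + g t) t := by
    intro t ht
    have hu0 : (0:ℝ) < 1 + t := by linarith
    have h1 : HasDerivAt (fun s : ℝ => 1 + s) 1 t := by
      simpa using (hasDerivAt_id t).const_add (1:ℝ)
    have h2 := Real.hasDerivAt_rpow_const (x := 1 + t) (p := -(θ - 1)) (Or.inl hu0.ne')
    have h3 : HasDerivAt (fun s : ℝ => (1 + s) ^ (-(θ - 1)))
        (-(θ - 1) * (1 + t) ^ (-(θ - 1) - 1)) t := by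
      simpa [Function.comp_def] using h2.comp t h1
    have h4 := h3.const_mul ξ
    have hxev : x =ᶠ[𝓝 t] fun s : ℝ => ξ * (1 + s) ^ (-(θ - 1)) := by
      filter_upwards [Ioi_mem_nhds ht] with s hs using hxdef s (le_of_lt hs)
    have h5 := h4.congr_of_eventuallyEq hxev
    refine h5.congr_deriv ?_; symm
    rw [hfpos (x t) (hxpos t ht.le), hxdef t ht.le, hg t ht.le,
      Real.mul_rpow hξ0.le (Real.rpow_nonneg hu0.le _), ← Real.rpow_mul hu0.le]
    have e2 : -(θ - 1) * β = -(β * (θ - 1)) := by ring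
    have e1 : -(θ - 1) - 1 = -θ := by ring
    rw [e2, e1]
    have e3 : (1 + t) ^ (-θ) * (1 + t) ^ (-(β * (θ - 1)) + θ)
        = (1 + t) ^ (-(β * (θ - 1))) := by
      rw [← Real.rpow_add hu0]; ring_nf
    linear_combination (ξ ^ β) * e3
  have part2 : ContinuousOn x (Ici 0) ∧ x 0 = ξ ∧
      ∀ t : ℝ, 0 < t → HasDerivAt x (-f (x t) + g t) t := ⟨hxcont, hx0, hxderiv⟩
  -- part 4
  have part4 : ∀ y : ℝ, 0 < y → F y = (y ^ (1 - β) - 1) / (β - 1) := by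
    intro y hy
    rw [hF y hy]
    have hcong : EqOn (fun u : ℝ => 1 / f u) (fun u : ℝ => u ^ (-β)) (uIcc y 1) := by
      intro u hu
      have hu0 : 0 < u := lt_of_lt_of_le (lt_min hy one_pos) hu.1
      show 1 / f u = u ^ (-β)
      rw [hfpos u hu0, one_div, ← Real.rpow_neg hu0.le]
    rw [intervalIntegral.integral_congr hcong,
      integral_rpow (Or.inr ⟨by intro h; exact absurd (neg_injective h) (by linarith),
        fun h => absurd (lt_of_lt_of_le (lt_min hy one_pos) h.1) (lt_irrefl 0)⟩)]
    rw [Real.one_rpow, show -β + 1 = 1 - β by ring]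
    rw [div_eq_div_iff (by intro h; apply hβ1.ne'; linarith [sub_eq_zero.mp h]) (ne_of_gt hβ1)]
    ring
  -- Finv explicit
  have hFinveq : ∀ t : ℝ, 0 ≤ t → f (Finv t) = (1 + (β - 1) * t) ^ (-β / (β - 1)) := by
    intro t ht
    obtain ⟨hp, hFt⟩ := hFinv t ht
    have h1 : (Finv t) ^ (1 - β) = 1 + (β - 1) * t := by
      rw [part4 _ hp] at hFt
      field_simp at hFt
      linarith
    calc f (Finv t) = ((Finv t) ^ (1 - β)) ^ (-β / (β - 1)) := by
          rw [hfpos _ hp, ← Real.rpow_mul hp.le]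
          congr 1
          field_simp
          ring
      _ = (1 + (β - 1) * t) ^ (-β / (β - 1)) := by rw [h1]
  -- part 5
  have part5 : Tendsto (fun t => f (Finv t) / ((β - 1) * t) ^ (-β / (β - 1))) atTop (𝓝 1) := by
    have hbase : Tendsto (fun t : ℝ => 1 + ((β - 1) * t)⁻¹) atTop (𝓝 1) := by
      have h1 : Tendsto (fun t : ℝ => (β - 1) * t) atTop atTop :=
        tendsto_id.const_mul_atTop hβ1
      have h2 := h1.inv_tendsto_atTop
      simpa using tendsto_const_nhds.add h2
    have hcont : ContinuousAt (fun z : ℝ => z ^ (-β / (β - 1))) 1 :=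
      Real.continuousAt_rpow_const 1 _ (Or.inl one_ne_zero)
    have hcomp := hcont.tendsto.comp hbase
    rw [Real.one_rpow] at hcomp
    apply hcomp.congr'
    filter_upwards [eventually_gt_atTop (0:ℝ)] with t ht
    have hbt : (0:ℝ) < (β - 1) * t := mul_pos hβ1 ht
    have hb1 : (0:ℝ) < 1 + (β - 1) * t := by linarith
    show ((fun z : ℝ => z ^ (-β / (β - 1))) ∘ _) t = _
    simp only [Function.comp_apply]
    rw [hFinveq t ht.le, ← Real.div_rpow hb1.le hbt.le]
    congr 1
    field_simp
    ring
  -- part 6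
  have part6 : Tendsto (fun t => g t / f (Finv t)) atTop (𝓝 0) := by
    set p : ℝ := β / (β - 1) with hp
    set M : ℝ := max 1 (β - 1) with hM
    have hM1 : (1:ℝ) ≤ M := le_max_left _ _
    have hp0 : 0 ≤ p := by positivity
    set C : ℝ := (ξ * (θ - 1) + ξ ^ β) * M ^ p with hC
    have hbound : ∀ᶠ t in atTop, ‖g t / f (Finv t)‖ ≤ C * (1 + t) ^ (p - θ) := by
      filter_upwards [eventually_ge_atTop (0:ℝ)] with t ht
      have hu0 : (0:ℝ) < 1 + t := by linarith
      have hb1 : (0:ℝ) < 1 + (β - 1) * t := by nlinarith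
      have hA : (0:ℝ) < (1 + t) ^ (-θ) := Real.rpow_pos_of_pos hu0 _
      have hgabs : |g t| ≤ (1 + t) ^ (-θ) * (ξ * (θ - 1) + ξ ^ β) := by
        rw [hg t ht, abs_neg, abs_mul, abs_of_pos hA]
        apply mul_le_mul_of_nonneg_left _ hA.le
        refine (abs_sub _ _).trans ?_
        have h1 : |ξ * (θ - 1)| = ξ * (θ - 1) := abs_of_pos (by nlinarith)
        have h2 : |ξ ^ β * (1 + t) ^ (-(β * (θ - 1)) + θ)| ≤ ξ ^ β := by
          rw [abs_mul, abs_of_pos (Real.rpow_pos_of_pos hξ0 β),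
            abs_of_pos (Real.rpow_pos_of_pos hu0 _)]
          apply mul_le_of_le_one_right (Real.rpow_pos_of_pos hξ0 β).le
          apply Real.rpow_le_one_of_one_le_of_nonpos (by linarith)
          have : β < θ * (β - 1) := (div_lt_iff₀ hβ1).mp hθ
          nlinarith
        linarith
      have hBb : (1 + (β - 1) * t) ^ p ≤ M ^ p * (1 + t) ^ p := by
        rw [← Real.mul_rpow (by linarith) hu0.le]
        apply Real.rpow_le_rpow hb1.le _ hp0
        have h1 : β - 1 ≤ M := le_max_right _ _
        nlinarith
      calc ‖g t / f (Finv t)‖ = |g t| * (1 + (β - 1) * t) ^ p := by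
            rw [Real.norm_eq_abs, hFinveq t ht, abs_div,
              abs_of_pos (Real.rpow_pos_of_pos hb1 _),
              show -β / (β - 1) = -p by rw [hp]; ring,
              Real.rpow_neg hb1.le]
            field_simp
        _ ≤ ((1 + t) ^ (-θ) * (ξ * (θ - 1) + ξ ^ β)) * (M ^ p * (1 + t) ^ p) := by
            apply mul_le_mul hgabs hBb (Real.rpow_pos_of_pos hb1 _).le
            positivity
        _ = C * (1 + t) ^ (p - θ) := by
            rw [show p - θ = -θ + p by ring, Real.rpow_add hu0, hC]
            ring
    apply squeeze_zero_norm' hbound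
    have h1 : Tendsto (fun u : ℝ => u ^ (p - θ)) atTop (𝓝 0) := by
      rw [show p - θ = -(θ - p) by ring]
      exact tendsto_rpow_neg_atTop (by linarith)
    have h2 : Tendsto (fun t : ℝ => (1 + t) ^ (p - θ)) atTop (𝓝 0) :=
      h1.comp (tendsto_atTop_add_const_left atTop 1 tendsto_id)
    simpa using h2.const_mul C
  -- part 7
  have part7 : Tendsto (fun t => F (x t) / t) atTop atTop := by
    have hσ : 1 < (θ - 1) * (β - 1) := by
      have : β < θ * (β - 1) := (div_lt_iff₀ hβ1).mp hθ
      nlinarith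
    have hFx : ∀ t : ℝ, 0 ≤ t →
        F (x t) = (ξ ^ (1 - β) * (1 + t) ^ ((θ - 1) * (β - 1)) - 1) / (β - 1) := by
      intro t ht
      have hu0 : (0:ℝ) < 1 + t := by linarith
      rw [part4 _ (hxpos t ht), hxdef t ht,
        Real.mul_rpow hξ0.le (Real.rpow_nonneg hu0.le _), ← Real.rpow_mul hu0.le,
        show -(θ - 1) * (1 - β) = (θ - 1) * (β - 1) by ring]
    have hL : Tendsto (fun t : ℝ =>
        (ξ ^ (1 - β) * t ^ ((θ - 1) * (β - 1) - 1) - 1) / (β - 1)) atTop atTop := by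
      have h1 : Tendsto (fun t : ℝ => t ^ ((θ - 1) * (β - 1) - 1)) atTop atTop :=
        tendsto_rpow_atTop (by linarith)
      have h2 := h1.const_mul_atTop (Real.rpow_pos_of_pos hξ0 (1 - β))
      have h3 := tendsto_atTop_add_const_right atTop (-1) h2
      have h4 := h3.atTop_div_const hβ1
      apply h4.congr
      intro t
      ring_nf
    apply tendsto_atTop_mono' atTop _ hL
    filter_upwards [eventually_ge_atTop (1:ℝ)] with t ht
    have ht0 : (0:ℝ) < t := by linarith
    have hu0 : (0:ℝ) < 1 + t := by linarith
    rw [hFx t (by linarith), div_div,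
      div_le_div_iff₀ hβ1 (by positivity : (0:ℝ) < (β - 1) * t)]
    have e : t ^ ((θ - 1) * (β - 1) - 1) * t = t ^ ((θ - 1) * (β - 1)) := by
      rw [← Real.rpow_add_one ht0.ne']
      congr 1; ring
    have hmono : t ^ ((θ - 1) * (β - 1)) ≤ (1 + t) ^ ((θ - 1) * (β - 1)) :=
      Real.rpow_le_rpow ht0.le (by linarith) (by nlinarith)
    have hc0 : (0:ℝ) < ξ ^ (1 - β) := Real.rpow_pos_of_pos hξ0 _
    have e2 : (ξ ^ (1 - β) * t ^ ((θ - 1) * (β - 1) - 1) - 1) * ((β - 1) * t)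
        = (ξ ^ (1 - β) * (β - 1)) * (t ^ ((θ - 1) * (β - 1) - 1) * t) - (β - 1) * t := by ring
    rw [e2, e]
    have h5 := mul_le_mul_of_nonneg_left hmono
      (by positivity : (0:ℝ) ≤ ξ ^ (1 - β) * (β - 1))
    have h6 : (β - 1) * 1 ≤ (β - 1) * t := mul_le_mul_of_nonneg_left ht hβ1.le
    nlinarith [h5, h6]

  refine ⟨part1, ⟨hxcont, hx0, hxderiv⟩, ?_, part4, part5, part6, part7⟩
  intro y hy t ht
  obtain ⟨h1, h2, h3⟩ := hy
  exact sol_unique hβ hf hxcont hx0 hxderiv h1 h2 h3 ht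
end
end

section
/- Let β > 1, A > (β-1)^{-1/(β-1)}, ξ > 0, f(x) = sgn(x)|x|^β, and g(t) = (A^β - A/(β-1))·((A/ξ)^{β-1} + t)^{-β/(β-1)} for t ≥ 0, so g(t) > 0 for all t ≥ 0. Then the unique continuous solution of x'(t) = -f(x(t)) + g(t), t > 0, x(0) = ξ, is x(t) = A((A/ξ)^{β-1} + t)^{-1/(β-1)}; moreover, with F(x) = ∫_x^1 du/f(u), one has lim_{t→∞} g(t)/(f∘F⁻¹)(t) = (A^β - A/(β-1))/(β-1)^{-β/(β-1)} =: L > 0, lim_{t→∞} x(t)/F⁻¹(t) = A/(β-1)^{-1/(β-1)}, and lim_{t→∞} F(x(t))/t = A^{1-β}/(β-1) =: Λ* ∈ (0,1), which satisfies (1 - Λ*)·Λ*^{-β/(β-1)} = L. -/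
open Filter Real Set Topology MeasureTheory

noncomputable section

lemma aux_mono (β : ℝ) (hβ : 1 < β) :
    Monotone (fun y : ℝ => Real.sign y * |y| ^ β) := by
  have hpos : ∀ y : ℝ, 0 < y → Real.sign y * |y| ^ β = y ^ β := by
    intro y hy; rw [Real.sign_of_pos hy, abs_of_pos hy, one_mul]
  have hneg : ∀ y : ℝ, y < 0 → Real.sign y * |y| ^ β = -((-y) ^ β) := by
    intro y hy; rw [Real.sign_of_neg hy, abs_of_neg hy, neg_one_mul]
  have h0 : Real.sign (0:ℝ) * |(0:ℝ)| ^ β = 0 := by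
    simp [Real.sign_zero]
  intro p q hpq
  dsimp only
  rcases lt_trichotomy p 0 with hp | hp | hp
  · rcases lt_trichotomy q 0 with hq | hq | hq
    · simp only [hneg p hp, hneg q hq, neg_le_neg_iff]
      exact Real.rpow_le_rpow (by linarith) (by linarith) (by linarith)
    · subst hq; rw [h0, hneg p hp]
      simp [Real.rpow_nonneg (by linarith : (0:ℝ) ≤ -p)]
    · rw [hneg p hp, hpos q hq]
      have h1 : -((-p) ^ β) ≤ 0 := neg_nonpos.2 (Real.rpow_nonneg (by linarith) _)
      have h2 : (0:ℝ) ≤ q ^ β := Real.rpow_nonneg hq.le _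
      linarith
  · subst hp
    rcases eq_or_lt_of_le hpq with hq | hq
    · rw [← hq]
    · rw [h0, hpos q hq]; exact Real.rpow_nonneg hq.le _
  · rw [hpos p hp, hpos q (lt_of_lt_of_le hp hpq)]
    exact Real.rpow_le_rpow hp.le hpq (by linarith)

/-- Example 3.3: with `β > 1`, `A > (β-1)^{-1/(β-1)}`, `ξ > 0`, `f(x) = sgn(x)|x|^β`
and the given positive perturbation `g`, the unique continuous solution of
`x' = -f(x) + g`, `x(0) = ξ`, is `x(t) = A((A/ξ)^{β-1}+t)^{-1/(β-1)}`; moreover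
`g(t)/(f∘F⁻¹)(t) → L := (A^β - A/(β-1))/(β-1)^{-β/(β-1)} > 0`,
`x(t)/F⁻¹(t) → A/(β-1)^{-1/(β-1)}`, and `F(x(t))/t → Λ* := A^{1-β}/(β-1) ∈ (0,1)`,
which satisfies `(1-Λ*)Λ*^{-β/(β-1)} = L`. -/
theorem stmt_17 (β A ξ : ℝ) (hβ : 1 < β)
    (hA : (β - 1) ^ (-((1:ℝ) / (β - 1))) < A) (hξ : 0 < ξ)
    (f g F Finv x : ℝ → ℝ)
    (hf : ∀ y : ℝ, f y = Real.sign y * |y| ^ β)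
    (hg : ∀ t : ℝ, 0 ≤ t → g t =
      (A ^ β - A / (β - 1)) * ((A / ξ) ^ (β - 1) + t) ^ (-(β / (β - 1))))
    (hxdef : ∀ t : ℝ, 0 ≤ t → x t = A * ((A / ξ) ^ (β - 1) + t) ^ (-(1 / (β - 1))))
    (hF : ∀ y : ℝ, 0 < y → F y = ∫ u in y..(1:ℝ), 1 / f u)
    (hFinv : ∀ t : ℝ, 0 ≤ t → 0 < Finv t ∧ F (Finv t) = t) :
    (∀ t : ℝ, 0 ≤ t → 0 < g t) ∧
    IsSol f g ξ x ∧
    (∀ y : ℝ → ℝ, IsSol f g ξ y → ∀ t : ℝ, 0 ≤ t → y t = x t) ∧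
    (0 < (A ^ β - A / (β - 1)) / (β - 1) ^ (-(β / (β - 1)))) ∧
    Tendsto (fun t => g t / f (Finv t)) atTop
      (nhds ((A ^ β - A / (β - 1)) / (β - 1) ^ (-(β / (β - 1))))) ∧
    Tendsto (fun t => x t / Finv t) atTop (nhds (A / (β - 1) ^ (-((1:ℝ) / (β - 1))))) ∧
    A ^ (1 - β) / (β - 1) ∈ Set.Ioo (0:ℝ) 1 ∧
    Tendsto (fun t => F (x t) / t) atTop (nhds (A ^ (1 - β) / (β - 1))) ∧
    (1 - A ^ (1 - β) / (β - 1)) * (A ^ (1 - β) / (β - 1)) ^ (-(β / (β - 1))) =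
      (A ^ β - A / (β - 1)) / (β - 1) ^ (-(β / (β - 1))) := by
  have hb : (0:ℝ) < β - 1 := by linarith
  have hbne : β - 1 ≠ 0 := hb.ne'
  have hA0 : 0 < A := lt_trans (Real.rpow_pos_of_pos hb _) hA
  set c : ℝ := (A / ξ) ^ (β - 1) with hcdef
  have hc : 0 < c := Real.rpow_pos_of_pos (div_pos hA0 hξ) _
  -- A^(β-1) > 1/(β-1)
  have hAb : 1 / (β - 1) < A ^ (β - 1) := by
    have h1 := Real.rpow_lt_rpow (Real.rpow_pos_of_pos hb _).le hA hb
    rw [← Real.rpow_mul hb.le] at h1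
    have he : -(1 / (β - 1)) * (β - 1) = -1 := by field_simp
    rw [he, Real.rpow_neg_one, inv_eq_one_div] at h1
    exact h1
  have hL' : 0 < A ^ β - A / (β - 1) := by
    have h2 : A ^ β = A ^ (β - 1) * A := by
      rw [← Real.rpow_add_one hA0.ne']; congr 1; ring
    have h3 : A / (β - 1) = A * (1 / (β - 1)) := by ring
    nlinarith [mul_pos hA0 (sub_pos.2 hAb)]
  -- positivity of g
  have hgpos : ∀ t : ℝ, 0 ≤ t → 0 < g t := by
    intro t ht
    rw [hg t ht]
    exact mul_pos hL' (Real.rpow_pos_of_pos (by linarith) _)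
  -- f on positives
  have hfpos : ∀ y : ℝ, 0 < y → f y = y ^ β := by
    intro y hy; rw [hf, Real.sign_of_pos hy, abs_of_pos hy, one_mul]
  have hfmono : Monotone f := by
    have := aux_mono β hβ
    intro p q hpq
    rw [hf, hf]; exact this hpq
  -- the explicit solution
  set X : ℝ → ℝ := fun t => A * (c + t) ^ (-(1 / (β - 1))) with hXdef
  have hXpos : ∀ t : ℝ, 0 ≤ t → 0 < X t := by
    intro t ht
    exact mul_pos hA0 (Real.rpow_pos_of_pos (by linarith) _)
  have hX0 : X 0 = ξ := by
    have : ((A / ξ) ^ (β - 1) : ℝ) ^ (-(1 / (β - 1))) = ξ / A := by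
      rw [← Real.rpow_mul (div_pos hA0 hξ).le]
      have he : (β - 1) * -(1 / (β - 1)) = -1 := by field_simp
      rw [he, Real.rpow_neg_one, inv_div]
    simp only [hXdef, hcdef, add_zero, this]
    field_simp
  have hXcont : ContinuousOn X (Set.Ici 0) := by
    apply ContinuousOn.mul continuousOn_const
    apply ContinuousOn.rpow_const
    · exact (continuous_const.add continuous_id).continuousOn
    · intro t ht
      exact Or.inl (by simp only [mem_Ici] at ht; positivity)
  have hXderiv : ∀ t : ℝ, 0 < t → HasDerivAt X (-f (X t) + g t) t := by
    intro t ht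
    have hct : 0 < c + t := by linarith
    have h1 : HasDerivAt (fun s : ℝ => c + s) 1 t := by
      simpa using (hasDerivAt_id t).const_add c
    have h2 := (h1.rpow_const (p := -(1 / (β - 1))) (Or.inl hct.ne')).const_mul A
    refine h2.congr_deriv ?_
    symm
    rw [hfpos _ (hXpos t ht.le), hg t ht.le]
    have hXt : X t = A * (c + t) ^ (-(1 / (β - 1))) := rfl
    rw [hXt, Real.mul_rpow hA0.le (Real.rpow_nonneg hct.le _), ← Real.rpow_mul hct.le]
    have he1 : -(1 / (β - 1)) * β = -(β / (β - 1)) := by ring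
    have he2 : -(1 / (β - 1)) - 1 = -(β / (β - 1)) := by field_simp; ring
    rw [he1, he2]
    have hP : (0:ℝ) < (c + t) ^ (-(β / (β - 1))) := Real.rpow_pos_of_pos hct _
    field_simp
    ring
  have hsolx : IsSol f g ξ x := by
    refine ⟨hXcont.congr (fun t ht => hxdef t ht), (hxdef 0 le_rfl).trans hX0, ?_⟩
    intro t ht
    have hev : x =ᶠ[nhds t] X := by
      filter_upwards [Ioi_mem_nhds ht] with s hs
      exact hxdef s (le_of_lt hs)
    have h3 := (hXderiv t ht).congr_of_eventuallyEq hev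
    rw [show x t = X t from hxdef t ht.le]
    exact h3
  have huniq : ∀ y : ℝ → ℝ, IsSol f g ξ y → ∀ t : ℝ, 0 ≤ t → y t = x t := by
    intro y hy t ht
    obtain ⟨hycont, hy0, hyd⟩ := hy
    set D : ℝ → ℝ := fun s => (y s - X s) ^ 2 with hD
    have hDcont : ContinuousOn D (Set.Ici 0) := (hycont.sub hXcont).pow 2
    have hDder : ∀ s : ℝ, 0 < s → HasDerivAt D (2 * (y s - X s) * (f (X s) - f (y s))) s := by
      intro s hs
      have h1 := ((hyd s hs).sub (hXderiv s hs)).pow 2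
      refine h1.congr_deriv ?_
      symm
      push_cast [Pi.sub_apply]
      ring
    have key : ∀ s : ℝ, 0 < s → deriv D s ≤ 0 := by
      intro s hs
      rw [(hDder s hs).deriv]
      rcases le_total (y s) (X s) with h | h
      · have h4 := hfmono h
        nlinarith [mul_nonneg (by linarith : (0:ℝ) ≤ X s - y s)
          (by linarith : (0:ℝ) ≤ f (X s) - f (y s))]
      · have h4 := hfmono h
        nlinarith [mul_nonneg (by linarith : (0:ℝ) ≤ y s - X s)
          (by linarith : (0:ℝ) ≤ f (y s) - f (X s))]
    have hanti : AntitoneOn D (Set.Ici 0) := by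
      apply antitoneOn_of_deriv_nonpos (convex_Ici 0) hDcont
      · intro s hs
        rw [interior_Ici] at hs
        exact ((hDder s hs).differentiableAt).differentiableWithinAt
      · intro s hs
        rw [interior_Ici] at hs
        exact key s hs
    have hD0 : D 0 = 0 := by
      simp [hD, hy0, hX0]
    have hDt : D t ≤ 0 := hD0 ▸ hanti self_mem_Ici ht ht
    have h5 : (y t - X t) ^ 2 = 0 := le_antisymm hDt (sq_nonneg _)
    have h6 : y t - X t = 0 := by
      exact pow_eq_zero_iff (by norm_num : (2:ℕ) ≠ 0) |>.mp h5
    rw [hxdef t ht]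
    have h7 : X t = A * (c + t) ^ (-(1 / (β - 1))) := rfl
    linarith
  -- explicit value of F
  have hFval : ∀ y : ℝ, 0 < y → F y = (y ^ (-(β - 1)) - 1) / (β - 1) := by
    intro y hy
    rw [hF y hy]
    have hsub : Set.EqOn (fun u : ℝ => 1 / f u) (fun u : ℝ => u ^ (-β)) (Set.uIcc y 1) := by
      intro u hu
      have hu0 : 0 < u := by
        rcases Set.mem_uIcc.mp hu with ⟨h1, h2⟩ | ⟨h1, h2⟩ <;> linarith
      simp only
      rw [hfpos u hu0, one_div, ← Real.rpow_neg hu0.le]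
    rw [intervalIntegral.integral_congr hsub]
    have h0n : (0:ℝ) ∉ Set.uIcc y 1 := by
      intro h
      rcases Set.mem_uIcc.mp h with ⟨h1, h2⟩ | ⟨h1, h2⟩ <;> linarith
    rw [integral_rpow (Or.inr ⟨by intro h; apply hbne; linarith [neg_eq_iff_eq_neg.mp h], h0n⟩)]
    rw [Real.one_rpow]
    have he : -β + 1 = -(β - 1) := by ring
    rw [he]
    rw [div_eq_div_iff (neg_ne_zero.mpr hbne) hbne]
    ring
  -- explicit value of Finv
  have hFinvval : ∀ t : ℝ, 0 ≤ t → Finv t = ((β - 1) * t + 1) ^ (-(1 / (β - 1))) := by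
    intro t ht
    obtain ⟨hpos, hFt⟩ := hFinv t ht
    rw [hFval _ hpos] at hFt
    have h1 : (Finv t) ^ (-(β - 1)) = (β - 1) * t + 1 := by
      rw [div_eq_iff hbne] at hFt
      linarith
    have h2 : ((Finv t) ^ (-(β - 1))) ^ (-(1 / (β - 1))) = Finv t := by
      rw [← Real.rpow_mul hpos.le]
      rw [show -(β - 1) * -(1 / (β - 1)) = 1 by field_simp, Real.rpow_one]
    rw [← h2, h1]
  -- the basic rational limit
  have hQ : Tendsto (fun t : ℝ => ((β - 1) * t + 1) / (c + t)) atTop (nhds (β - 1)) := by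
    have h1 : Tendsto (fun t : ℝ => ((β - 1) + 1 * t⁻¹) / (1 + c * t⁻¹)) atTop
        (nhds (((β - 1) + 1 * 0) / (1 + c * 0))) := by
      apply Tendsto.div
      · exact tendsto_const_nhds.add (tendsto_inv_atTop_zero.const_mul 1)
      · exact tendsto_const_nhds.add (tendsto_inv_atTop_zero.const_mul c)
      · norm_num
    norm_num at h1
    apply Tendsto.congr' _ h1
    filter_upwards [eventually_gt_atTop 0] with t ht0
    have hct : (0:ℝ) < c + t := by linarith
    have hd1 : (0:ℝ) < 1 + c * t⁻¹ := by positivity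
    rw [div_eq_div_iff hd1.ne' hct.ne']
    field_simp [ht0.ne']
    ring
  have hR : ∀ r : ℝ, Tendsto (fun t : ℝ => (((β - 1) * t + 1) / (c + t)) ^ r) atTop
      (nhds ((β - 1) ^ r)) := by
    intro r
    have := ((Real.continuousAt_rpow_const _ r (Or.inl hbne)).tendsto.comp hQ)
    exact this
  have hratio : ∀ p q e : ℝ, 0 < p → 0 < q → p ^ (-e) / q ^ (-e) = (q / p) ^ e := by
    intro p q e hp hq
    rw [Real.rpow_neg hp.le, Real.rpow_neg hq.le, Real.div_rpow hq.le hp.le]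
    rw [div_eq_div_iff (by positivity) (by positivity)]
    field_simp
  have hLpos : 0 < (A ^ β - A / (β - 1)) / (β - 1) ^ (-(β / (β - 1))) :=
    div_pos hL' (Real.rpow_pos_of_pos hb _)
  have hlim1 : Tendsto (fun t => g t / f (Finv t)) atTop
      (nhds ((A ^ β - A / (β - 1)) / (β - 1) ^ (-(β / (β - 1))))) := by
    have h1 := (hR (β / (β - 1))).const_mul (A ^ β - A / (β - 1))
    have h2 : (A ^ β - A / (β - 1)) / (β - 1) ^ (-(β / (β - 1)))
        = (A ^ β - A / (β - 1)) * (β - 1) ^ (β / (β - 1)) := by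
      rw [Real.rpow_neg hb.le, div_eq_mul_inv, inv_inv]
    rw [h2]
    apply Tendsto.congr' _ h1
    filter_upwards [eventually_ge_atTop 0] with t ht
    have hbt : (0:ℝ) < (β - 1) * t + 1 := by nlinarith
    have hct : (0:ℝ) < c + t := by linarith
    have hfv : f (Finv t) = ((β - 1) * t + 1) ^ (-(β / (β - 1))) := by
      rw [hFinvval t ht, hfpos _ (Real.rpow_pos_of_pos hbt _), ← Real.rpow_mul hbt.le]
      congr 1
      ring
    rw [hg t ht, hfv, mul_div_assoc, hratio _ _ _ hct hbt]
  have hlim2 : Tendsto (fun t => x t / Finv t) atTop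
      (nhds (A / (β - 1) ^ (-((1:ℝ) / (β - 1))))) := by
    have h1 := (hR (1 / (β - 1))).const_mul A
    have h2 : A / (β - 1) ^ (-((1:ℝ) / (β - 1))) = A * (β - 1) ^ ((1:ℝ) / (β - 1)) := by
      rw [Real.rpow_neg hb.le, div_eq_mul_inv, inv_inv]
    rw [h2]
    apply Tendsto.congr' _ h1
    filter_upwards [eventually_ge_atTop 0] with t ht
    have hbt : (0:ℝ) < (β - 1) * t + 1 := by nlinarith
    have hct : (0:ℝ) < c + t := by linarith
    rw [hxdef t ht, hFinvval t ht, mul_div_assoc, hratio _ _ _ hct hbt]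
  have hA1β : A ^ (1 - β) = A ^ (-(β - 1)) := by
    congr 1
    ring
  have hlim3 : Tendsto (fun t => F (x t) / t) atTop (nhds (A ^ (1 - β) / (β - 1))) := by
    have h1 : Tendsto (fun t : ℝ => A ^ (-(β - 1)) / (β - 1)
        + (A ^ (-(β - 1)) * c - 1) / (β - 1) * t⁻¹) atTop
        (nhds (A ^ (-(β - 1)) / (β - 1) + (A ^ (-(β - 1)) * c - 1) / (β - 1) * 0)) :=
      tendsto_const_nhds.add (tendsto_inv_atTop_zero.const_mul _)
    rw [mul_zero, add_zero] at h1
    rw [hA1β]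
    apply Tendsto.congr' _ h1
    filter_upwards [eventually_gt_atTop 0] with t ht0
    have hct : (0:ℝ) < c + t := by linarith
    have hxt : x t = A * (c + t) ^ (-(1 / (β - 1))) := hxdef t ht0.le
    have hxpos : 0 < x t := by rw [hxt]; positivity
    have hxpow : (x t) ^ (-(β - 1)) = A ^ (-(β - 1)) * (c + t) := by
      rw [hxt, Real.mul_rpow hA0.le (Real.rpow_nonneg hct.le _), ← Real.rpow_mul hct.le]
      rw [show -(1 / (β - 1)) * -(β - 1) = (1:ℝ) from by field_simp, Real.rpow_one]
    rw [hFval _ hxpos, hxpow]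
    field_simp
    ring
  have hApow : 0 < A ^ (β - 1) := Real.rpow_pos_of_pos hA0 _
  have hIoo : A ^ (1 - β) / (β - 1) ∈ Set.Ioo (0:ℝ) 1 := by
    constructor
    · exact div_pos (Real.rpow_pos_of_pos hA0 _) hb
    · rw [div_lt_one hb, hA1β, Real.rpow_neg hA0.le]
      have h1 : 1 < A ^ (β - 1) * (β - 1) := by
        have h2 := (div_lt_iff₀ hb).mp hAb
        linarith
      nlinarith [mul_inv_cancel₀ hApow.ne', inv_pos.mpr hApow]
  have hfinal : (1 - A ^ (1 - β) / (β - 1)) * (A ^ (1 - β) / (β - 1)) ^ (-(β / (β - 1))) =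
      (A ^ β - A / (β - 1)) / (β - 1) ^ (-(β / (β - 1))) := by
    have hmul : A ^ (1 - β) * A ^ β = A := by
      rw [← Real.rpow_add hA0, show (1 - β) + β = (1:ℝ) from by ring, Real.rpow_one]
    have hpowA : (A ^ (1 - β)) ^ (-(β / (β - 1))) = A ^ β := by
      rw [← Real.rpow_mul hA0.le]
      congr 1
      field_simp
      ring
    rw [Real.div_rpow (Real.rpow_nonneg hA0.le _) hb.le, hpowA]
    have hden : ((β - 1):ℝ) ^ (-(β / (β - 1))) ≠ 0 := (Real.rpow_pos_of_pos hb _).ne'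
    field_simp
    linear_combination -hmul
  exact ⟨hgpos, hsolx, huniq, hLpos, hlim1, hlim2, hIoo, hlim3, hfinal⟩
end
end

section
/- Let β > 1, ξ > (β e^{e+1})^{-1/(β-1)}, f(x) = sgn(x)|x|^β, and g(t) = ξ^β/log₂(t+e^e) - (ξ/β)·(log₂(t+e^e))^{-1-1/β}·((t+e^e)·log(t+e^e))^{-1} for t ≥ 0, where log₂ = log∘log denotes the iterated logarithm; the restriction on ξ ensures g(t) > 0 for all t ≥ 0. Then x(t) = ξ/(log₂(t+e^e))^{1/β} is the unique continuous solution of x'(t) = -f(x(t)) + g(t), t > 0, x(0) = ξ/(log₂(e^e))^{1/β}; moreover lim_{t→∞} g(t)/(ξ^β/log₂(t+e^e)) = 1 and lim_{t→∞} f(x(t))/g(t) = 1. -/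
open Filter Real Set Topology MeasureTheory

noncomputable section

/-- Example 3.6: with `β > 1`, `ξ > (βe^{e+1})^{-1/(β-1)}`, `f(x) = sgn(x)|x|^β` and
the given slowly varying perturbation `g` (with iterated-logarithmic decay), the
function `x(t) = ξ/(log log(t+e^e))^{1/β}` is the unique continuous solution of
`x' = -f(x) + g`; moreover `g(t)/(ξ^β/ log log(t+e^e)) → 1` and `f(x(t))/g(t) → 1`. -/
theorem stmt_19 (β ξ : ℝ) (hβ : 1 < β)
    (hξ : (β * Real.exp (Real.exp 1 + 1)) ^ (-((1:ℝ) / (β - 1))) < ξ)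
    (f g x : ℝ → ℝ)
    (hf : ∀ y : ℝ, f y = Real.sign y * |y| ^ β)
    (hg : ∀ t : ℝ, 0 ≤ t → g t =
      ξ ^ β / Real.log (Real.log (t + Real.exp (Real.exp 1))) -
        (ξ / β) * (Real.log (Real.log (t + Real.exp (Real.exp 1)))) ^ (-1 - (1:ℝ)/β) *
          (1 / ((t + Real.exp (Real.exp 1)) * Real.log (t + Real.exp (Real.exp 1)))))
    (hxdef : ∀ t : ℝ, 0 ≤ t →
      x t = ξ / (Real.log (Real.log (t + Real.exp (Real.exp 1)))) ^ ((1:ℝ)/β)) :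
    (∀ t : ℝ, 0 ≤ t → 0 < g t) ∧
    IsSol f g (ξ / (Real.log (Real.log (Real.exp (Real.exp 1)))) ^ ((1:ℝ)/β)) x ∧
    (∀ y : ℝ → ℝ,
      IsSol f g (ξ / (Real.log (Real.log (Real.exp (Real.exp 1)))) ^ ((1:ℝ)/β)) y →
      ∀ t : ℝ, 0 ≤ t → y t = x t) ∧
    Tendsto (fun t => g t / (ξ ^ β / Real.log (Real.log (t + Real.exp (Real.exp 1)))))
      atTop (nhds 1) ∧
    Tendsto (fun t => f (x t) / g t) atTop (nhds 1) := by
  set E := Real.exp (Real.exp 1) with hE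
  have hβ0 : (0:ℝ) < β := by linarith
  have hβne : β ≠ 0 := ne_of_gt hβ0
  have hbase : (0:ℝ) < β * Real.exp (Real.exp 1 + 1) := by positivity
  have hβ1 : β - 1 ≠ 0 := ne_of_gt (by linarith)
  have hξ0 : 0 < ξ := lt_trans (Real.rpow_pos_of_pos hbase _) hξ
  have hupos : ∀ t : ℝ, 0 ≤ t → 0 < t + E := fun t ht => by positivity
  have huE : ∀ t : ℝ, 0 ≤ t → E ≤ t + E := fun t ht => by linarith
  have hℓ : ∀ t : ℝ, 0 ≤ t → Real.exp 1 ≤ Real.log (t + E) := by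
    intro t ht
    rw [Real.le_log_iff_exp_le (hupos t ht)]
    exact huE t ht
  have hℓpos : ∀ t : ℝ, 0 ≤ t → 0 < Real.log (t + E) :=
    fun t ht => lt_of_lt_of_le (Real.exp_pos 1) (hℓ t ht)
  have hL1 : ∀ t : ℝ, 0 ≤ t → 1 ≤ Real.log (Real.log (t + E)) := by
    intro t ht
    rw [Real.le_log_iff_exp_le (hℓpos t ht)]
    exact hℓ t ht
  have hLpos : ∀ t : ℝ, 0 ≤ t → 0 < Real.log (Real.log (t + E)) :=
    fun t ht => lt_of_lt_of_le one_pos (hL1 t ht)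
  -- key inequality
  have hstep : ∀ t : ℝ, 0 ≤ t →
      (1/β) * (Real.log (Real.log (t + E))) ^ (-((1:ℝ)/β)) *
        (1 / ((t + E) * Real.log (t + E))) < ξ ^ (β - 1) := by
    intro t ht
    have h1 : (Real.log (Real.log (t + E))) ^ (-((1:ℝ)/β)) ≤ 1 :=
      Real.rpow_le_one_of_one_le_of_nonpos (hL1 t ht) (neg_nonpos.mpr (by positivity))
    have h2 : Real.exp (Real.exp 1 + 1) ≤ (t + E) * Real.log (t + E) := by
      rw [Real.exp_add]
      exact mul_le_mul (huE t ht) (hℓ t ht) (Real.exp_pos 1).le (hupos t ht).le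
    have h3 : (β * Real.exp (Real.exp 1 + 1))⁻¹ < ξ ^ (β - 1) := by
      have hc : ((β * Real.exp (Real.exp 1 + 1)) ^ (-((1:ℝ)/(β-1)))) ^ (β - 1)
          < ξ ^ (β - 1) :=
        Real.rpow_lt_rpow (Real.rpow_pos_of_pos hbase _).le hξ (by linarith)
      rwa [← Real.rpow_mul hbase.le, show (-((1:ℝ)/(β-1))) * (β-1) = -1 by
        rw [neg_mul, one_div, inv_mul_cancel₀ hβ1], Real.rpow_neg_one] at hc
    calc (1/β) * (Real.log (Real.log (t + E))) ^ (-((1:ℝ)/β)) *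
        (1 / ((t + E) * Real.log (t + E)))
        ≤ (1/β) * 1 * (1 / Real.exp (Real.exp 1 + 1)) := by
          have h4 : 1 / ((t + E) * Real.log (t + E)) ≤ 1 / Real.exp (Real.exp 1 + 1) :=
            one_div_le_one_div_of_le (Real.exp_pos _) h2
          apply mul_le_mul
            (mul_le_mul le_rfl h1 (Real.rpow_nonneg (hLpos t ht).le _) (by positivity)) h4
            (one_div_nonneg.mpr (mul_nonneg (hupos t ht).le (hℓpos t ht).le)) (by positivity)
      _ = (β * Real.exp (Real.exp 1 + 1))⁻¹ := by
          rw [mul_one, div_mul_div_comm, one_mul, one_div]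
      _ < ξ ^ (β - 1) := h3
  have e1 : ∀ t : ℝ, 0 ≤ t → (Real.log (Real.log (t + E))) ^ (-1 - (1:ℝ)/β)
      = (Real.log (Real.log (t + E)))⁻¹ * (Real.log (Real.log (t + E))) ^ (-((1:ℝ)/β)) := by
    intro t ht
    rw [show (-1 - (1:ℝ)/β) = (-1) + (-((1:ℝ)/β)) by ring,
      Real.rpow_add (hLpos t ht), Real.rpow_neg_one]
  have eβ : (1:ℝ) + (β - 1) = β := by ring
  have eξ : ξ ^ β = ξ * ξ ^ (β - 1) := by
    have h := Real.rpow_add hξ0 1 (β - 1)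
    rw [eβ, Real.rpow_one] at h
    exact h
  have hgpos : ∀ t : ℝ, 0 ≤ t → 0 < g t := by
    intro t ht
    rw [hg t ht, sub_pos, e1 t ht, eξ]
    have hLp := hLpos t ht
    calc (ξ / β) * ((Real.log (Real.log (t + E)))⁻¹ * (Real.log (Real.log (t + E))) ^ (-((1:ℝ)/β))) *
        (1 / ((t + E) * Real.log (t + E)))
        = (ξ * (Real.log (Real.log (t + E)))⁻¹) *
          ((1/β) * (Real.log (Real.log (t + E))) ^ (-((1:ℝ)/β)) *
            (1 / ((t + E) * Real.log (t + E)))) := by ring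
      _ < (ξ * (Real.log (Real.log (t + E)))⁻¹) * ξ ^ (β - 1) := by
          exact mul_lt_mul_of_pos_left (hstep t ht) (by positivity)
      _ = ξ * ξ ^ (β - 1) / Real.log (Real.log (t + E)) := by
          field_simp
  -- value of f along x
  have hfx : ∀ t : ℝ, 0 ≤ t → f (x t) = ξ ^ β / Real.log (Real.log (t + E)) := by
    intro t ht
    have hxpos : 0 < x t := by
      rw [hxdef t ht]
      exact div_pos hξ0 (Real.rpow_pos_of_pos (hLpos t ht) _)
    rw [hf, Real.sign_of_pos hxpos, abs_of_pos hxpos, one_mul, hxdef t ht,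
      Real.div_rpow hξ0.le (Real.rpow_pos_of_pos (hLpos t ht) _).le,
      ← Real.rpow_mul (hLpos t ht).le,
      show (1:ℝ)/β * β = 1 by field_simp, Real.rpow_one]
  -- continuity of x
  have hxcont : ContinuousOn x (Set.Ici 0) := by
    have c1 : ContinuousOn (fun t : ℝ => t + E) (Set.Ici 0) :=
      (continuous_id.add continuous_const).continuousOn
    have c2 : ContinuousOn (fun t : ℝ => Real.log (t + E)) (Set.Ici 0) :=
      c1.log (fun t ht => (hupos t ht).ne')
    have c3 : ContinuousOn (fun t : ℝ => Real.log (Real.log (t + E))) (Set.Ici 0) :=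
      c2.log (fun t ht => (hℓpos t ht).ne')
    have c4 : ContinuousOn (fun t : ℝ => ξ / (Real.log (Real.log (t + E))) ^ ((1:ℝ)/β))
        (Set.Ici 0) := by
      apply continuousOn_const.div (c3.rpow_const (fun t ht => Or.inl (hLpos t ht).ne'))
      intro t ht
      exact (Real.rpow_pos_of_pos (hLpos t ht) _).ne'
    exact c4.congr (fun t ht => hxdef t ht)
  -- initial value
  have hx0 : x 0 = ξ / (Real.log (Real.log E)) ^ ((1:ℝ)/β) := by
    have := hxdef 0 le_rfl
    rwa [zero_add] at this
  -- derivative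
  have hxderiv : ∀ t : ℝ, 0 < t → HasDerivAt x (-f (x t) + g t) t := by
    intro t ht
    have ht' : (0:ℝ) ≤ t := ht.le
    have h1 : HasDerivAt (fun s : ℝ => s + E) 1 t := (hasDerivAt_id t).add_const E
    have h2 : HasDerivAt (fun s : ℝ => Real.log (s + E)) (1 / (t + E)) t :=
      h1.log (hupos t ht').ne'
    have h3 : HasDerivAt (fun s : ℝ => Real.log (Real.log (s + E)))
        ((1 / (t + E)) / Real.log (t + E)) t :=
      h2.log (hℓpos t ht').ne'
    have h4 : HasDerivAt (fun s : ℝ => (Real.log (Real.log (s + E))) ^ (-((1:ℝ)/β)))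
        (((1 / (t + E)) / Real.log (t + E)) * (-((1:ℝ)/β)) *
          (Real.log (Real.log (t + E))) ^ ((-((1:ℝ)/β)) - 1)) t :=
      h3.rpow_const (Or.inl (hLpos t ht').ne')
    have h5 := h4.const_mul ξ
    have heq : x =ᶠ[nhds t] fun s : ℝ => ξ * (Real.log (Real.log (s + E))) ^ (-((1:ℝ)/β)) := by
      filter_upwards [isOpen_Ioi.mem_nhds (show t ∈ Set.Ioi (0:ℝ) from ht)] with s hs
      rw [hxdef s (le_of_lt hs), Real.rpow_neg (hLpos s (le_of_lt hs)).le, div_eq_mul_inv]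
    have h6 := h5.congr_of_eventuallyEq heq
    refine h6.congr_deriv ?_
    symm
    have hune := (hupos t ht').ne'
    have hℓne := (hℓpos t ht').ne'
    rw [hfx t ht', hg t ht', show (-1 - (1:ℝ)/β) = (-((1:ℝ)/β)) - 1 by ring]
    field_simp
    ring
  -- monotonicity of f
  have hfmono : Monotone f := by
    intro a b hab
    rw [hf a, hf b]
    rcases lt_trichotomy b 0 with hb | hb | hb
    · have ha : a < 0 := lt_of_le_of_lt hab hb
      rw [Real.sign_of_neg ha, Real.sign_of_neg hb, abs_of_neg ha, abs_of_neg hb]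
      simp only [neg_one_mul]
      exact neg_le_neg (Real.rpow_le_rpow (by linarith) (by linarith) (by linarith))
    · subst hb
      rw [Real.sign_zero, zero_mul]
      rcases lt_or_eq_of_le hab with ha | ha
      · rw [Real.sign_of_neg ha]
        nlinarith [Real.rpow_nonneg (abs_nonneg a) β]
      · subst ha
        rw [Real.sign_zero, zero_mul]
    · rcases lt_trichotomy a 0 with ha | ha | ha
      · rw [Real.sign_of_neg ha, Real.sign_of_pos hb]
        nlinarith [Real.rpow_nonneg (abs_nonneg a) β, Real.rpow_nonneg (abs_nonneg b) β]
      · subst ha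
        rw [Real.sign_zero, zero_mul, Real.sign_of_pos hb, one_mul]
        exact Real.rpow_nonneg (abs_nonneg b) β
      · rw [Real.sign_of_pos ha, Real.sign_of_pos hb, one_mul, one_mul,
          abs_of_pos ha, abs_of_pos hb]
        exact Real.rpow_le_rpow ha.le hab (by linarith)
  have hsol : IsSol f g (ξ / (Real.log (Real.log E)) ^ ((1:ℝ)/β)) x := ⟨hxcont, hx0, hxderiv⟩
  -- limits
  have hLtop : Tendsto (fun t : ℝ => Real.log (Real.log (t + E))) atTop atTop :=
    Real.tendsto_log_atTop.comp (Real.tendsto_log_atTop.comp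
      (tendsto_atTop_add_const_right _ E tendsto_id))
  have huℓtop : Tendsto (fun t : ℝ => (t + E) * Real.log (t + E)) atTop atTop :=
    (tendsto_atTop_add_const_right _ E tendsto_id).atTop_mul_atTop₀
      (Real.tendsto_log_atTop.comp (tendsto_atTop_add_const_right _ E tendsto_id))
  have hA : Tendsto (fun t : ℝ => (Real.log (Real.log (t + E))) ^ (-((1:ℝ)/β))) atTop (nhds 0) :=
    (tendsto_rpow_neg_atTop (by positivity)).comp hLtop
  have hB : Tendsto (fun t : ℝ => ((t + E) * Real.log (t + E))⁻¹) atTop (nhds 0) :=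
    tendsto_inv_atTop_zero.comp huℓtop
  have hF : Tendsto (fun t : ℝ => 1 - (ξ ^ ((1:ℝ) - β) / β) *
      (Real.log (Real.log (t + E))) ^ (-((1:ℝ)/β)) * ((t + E) * Real.log (t + E))⁻¹)
      atTop (nhds 1) := by
    have h := (((hA.const_mul (ξ ^ ((1:ℝ) - β) / β)).mul hB).const_sub 1)
    simpa using h
  have heq4 : (fun t : ℝ => 1 - (ξ ^ ((1:ℝ) - β) / β) *
      (Real.log (Real.log (t + E))) ^ (-((1:ℝ)/β)) * ((t + E) * Real.log (t + E))⁻¹)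
      =ᶠ[atTop] (fun t => g t / (ξ ^ β / Real.log (Real.log (t + E)))) := by
    filter_upwards [eventually_ge_atTop 0] with t ht
    have e2 : ξ ^ ((1:ℝ) - β) = ξ / ξ ^ β := by
      rw [Real.rpow_sub hξ0, Real.rpow_one]
    have hLne := (hLpos t ht).ne'
    have hune := (hupos t ht).ne'
    have hℓne := (hℓpos t ht).ne'
    have hξβ := (Real.rpow_pos_of_pos hξ0 β).ne'
    rw [hg t ht, e1 t ht, e2]
    field_simp
  have hT4 : Tendsto (fun t => g t / (ξ ^ β / Real.log (Real.log (t + E)))) atTop (nhds 1) :=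
    Tendsto.congr' heq4 hF
  have heq5 : (fun t : ℝ => (g t / (ξ ^ β / Real.log (Real.log (t + E))))⁻¹)
      =ᶠ[atTop] (fun t => f (x t) / g t) := by
    filter_upwards [eventually_ge_atTop 0] with t ht
    rw [hfx t ht, inv_div]
  have hT5 : Tendsto (fun t => f (x t) / g t) atTop (nhds 1) := by
    have := hT4.inv₀ one_ne_zero
    rw [inv_one] at this
    exact Tendsto.congr' heq5 this
  refine ⟨hgpos, hsol, ?_, hT4, hT5⟩
  -- uniqueness
  intro y hy t ht
  obtain ⟨hyc, hy0, hyd⟩ := hy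
  have hanti : AntitoneOn (fun s => (y s - x s) ^ 2) (Set.Ici 0) := by
    apply antitoneOn_of_deriv_nonpos (convex_Ici 0) ((hyc.sub hxcont).pow 2)
    · rw [interior_Ici]
      intro s hs
      exact (((hyd s hs).sub (hxderiv s hs)).pow 2).differentiableAt.differentiableWithinAt
    · rw [interior_Ici]
      intro s hs
      rw [(((hyd s hs).sub (hxderiv s hs)).pow 2).deriv]
      have key : (y s - x s) * (f (x s) - f (y s)) ≤ 0 := by
        rcases le_total (x s) (y s) with hxy | hxy
        · nlinarith [hfmono hxy]
        · nlinarith [hfmono hxy]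
      norm_num
      nlinarith [key]
  have hle : (y t - x t) ^ 2 ≤ (y 0 - x 0) ^ 2 := hanti self_mem_Ici ht ht
  have h00 : y 0 - x 0 = 0 := by rw [hy0, hx0]; ring
  have h2 : (y t - x t) ^ 2 = 0 := by
    have := sq_nonneg (y t - x t)
    rw [h00] at hle
    simp at hle
    rw [hle]; ring
  have hz : y t - x t = 0 := by
    have h3 := abs_eq_zero.mp (by nlinarith [abs_nonneg (y t - x t), sq_abs (y t - x t)] : |y t - x t| = 0)
    exact h3
  linarith
end
end
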